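/- arXiv:1901.04478 — 6 statements merged into one kernel-verified Lean document; each statement's English description precedes it below -/
import Mathlib

section
/- Let a, b > 1 and let ψ : ℕ → ℝ_{>0} satisfy Σ_{n=1}^∞ 1/ψ(n) < ∞. Then there exists ω : ℕ → ℝ_{>0} with Σ_{n=1}^∞ 1/ω(n) < ∞ such that for all n ∈ ℕ, ω(⌊log_b n⌋) ≤ ψ(⌊log_a n⌋). -/
/-- For `a, b > 1` and `ψ : ℕ → ℝ_{>0}` with summable reciprocals, there
exists `ω : ℕ → ℝ_{>0}` with summable reciprocals such that
`ω(⌊log_b n⌋) ≤ ψ(⌊log_a n⌋)` for all `n ≥ 1`. -/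
theorem stmt2 (a b : ℝ) (ha : 1 < a) (hb : 1 < b)
    (ψ : ℕ → ℝ) (hψ : ∀ n, 0 < ψ n) (hsum : Summable fun n => 1 / ψ n) :
    ∃ ω : ℕ → ℝ, (∀ n, 0 < ω n) ∧ (Summable fun n => 1 / ω n) ∧
      ∀ n : ℕ, 1 ≤ n → ω ⌊Real.logb b n⌋₊ ≤ ψ ⌊Real.logb a n⌋₊ := by
  set c : ℝ := Real.logb a b with hcdef
  have hc : 0 < c := Real.logb_pos ha hb
  set I : ℕ → Finset ℕ := fun k => Finset.Icc (⌈(k : ℝ) * c⌉₊ - 1) ⌈((k : ℝ) + 1) * c⌉₊ with hI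
  have hne : ∀ k, (I k).Nonempty := by
    intro k
    refine Finset.nonempty_Icc.2 ?_
    have h1 : ⌈(k : ℝ) * c⌉₊ ≤ ⌈((k : ℝ) + 1) * c⌉₊ :=
      Nat.ceil_le_ceil (by nlinarith)
    omega
  set ω : ℕ → ℝ := fun k => (I k).inf' (hne k) ψ with hω
  have hωpos : ∀ k, 0 < ω k := by
    intro k
    obtain ⟨m, hm, hme⟩ := Finset.exists_mem_eq_inf' (hne k) ψ
    simpa [hω, hme] using hψ m
  refine ⟨ω, hωpos, ?_, ?_⟩
  · -- summability
    set f : ℕ → ℝ := fun m => 1 / ψ m with hfdef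
    have hf : ∀ m, 0 ≤ f m := fun m => le_of_lt (one_div_pos.2 (hψ m))
    set C : ℕ := ⌊2 / c⌋₊ + 2 with hC
    have hcard : ∀ (N m : ℕ), ((Finset.range N).filter (fun k => m ∈ I k)).card ≤ C + 1 := by
      intro N m
      set B0 : ℕ := ⌊((m : ℝ) + 1) / c⌋₊ with hB0
      have hsub : (Finset.range N).filter (fun k => m ∈ I k) ⊆ Finset.Icc (B0 - C) B0 := by
        intro k hk
        simp only [Finset.mem_filter, Finset.mem_range, hI, Finset.mem_Icc] at hk
        obtain ⟨-, h1, h2⟩ := hk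
        have hup : k ≤ B0 := by
          have hceil : ⌈(k : ℝ) * c⌉₊ ≤ m + 1 := by omega
          have h3 : (k : ℝ) * c ≤ ((m + 1 : ℕ) : ℝ) := Nat.ceil_le.1 hceil
          refine Nat.le_floor ?_
          rw [le_div_iff₀ hc]
          push_cast at h3 ⊢
          linarith
        have hlo : B0 - C ≤ k := by
          have h4 : (m : ℝ) ≤ (⌈((k : ℝ) + 1) * c⌉₊ : ℝ) := by exact_mod_cast h2
          have h5 : (⌈((k : ℝ) + 1) * c⌉₊ : ℝ) < ((k : ℝ) + 1) * c + 1 :=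
            Nat.ceil_lt_add_one (by positivity)
          have h6 : (m : ℝ) < ((k : ℝ) + 1) * c + 1 := lt_of_le_of_lt h4 h5
          have h7 : (B0 : ℝ) ≤ ((m : ℝ) + 1) / c := Nat.floor_le (by positivity)
          have h8 : ((m : ℝ) + 1) / c < (k : ℝ) + 1 + 2 / c := by
            rw [div_lt_iff₀ hc]
            have : 0 < 2 / c * c := by positivity
            field_simp
            nlinarith
          have h9 : 2 / c < (⌊2 / c⌋₊ : ℝ) + 1 := Nat.lt_floor_add_one _
          have h10 : (B0 : ℝ) < (k : ℝ) + (C : ℝ) := by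
            push_cast [hC]
            linarith
          have h11 : B0 < k + C := by exact_mod_cast h10
          omega
        simp only [Finset.mem_Icc]
        exact ⟨hlo, hup⟩
      calc ((Finset.range N).filter (fun k => m ∈ I k)).card
          ≤ (Finset.Icc (B0 - C) B0).card := Finset.card_le_card hsub
        _ = B0 + 1 - (B0 - C) := Nat.card_Icc _ _
        _ ≤ C + 1 := by omega
    refine summable_of_sum_range_le (c := ((C : ℝ) + 1) * ∑' m, f m)
      (fun k => le_of_lt (one_div_pos.2 (hωpos k))) (fun N => ?_)
    set M : ℕ := ⌈(N : ℝ) * c⌉₊ + 1 with hM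
    have hsub2 : ∀ k ∈ Finset.range N, I k ⊆ Finset.range M := by
      intro k hk m hm
      simp only [hI, Finset.mem_Icc] at hm
      simp only [Finset.mem_range, hM]
      have hkN : k + 1 ≤ N := Finset.mem_range.1 hk
      have : ⌈((k : ℝ) + 1) * c⌉₊ ≤ ⌈(N : ℝ) * c⌉₊ := by
        refine Nat.ceil_le_ceil ?_
        have : ((k : ℝ) + 1) ≤ (N : ℝ) := by exact_mod_cast hkN
        nlinarith
      omega
    have step1 : ∑ k ∈ Finset.range N, 1 / ω k ≤
        ∑ k ∈ Finset.range N, ∑ m ∈ I k, f m := by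
      refine Finset.sum_le_sum fun k _ => ?_
      obtain ⟨m0, hm0, hme⟩ := Finset.exists_mem_eq_inf' (hne k) ψ
      have : 1 / ω k = f m0 := by rw [hω]; simp only [hme, hfdef]
      rw [this]
      exact Finset.single_le_sum (fun i _ => hf i) hm0
    have step2 : ∑ k ∈ Finset.range N, ∑ m ∈ I k, f m =
        ∑ m ∈ Finset.range M, ((Finset.range N).filter (fun k => m ∈ I k)).card * f m := by
      have e1 : ∀ k ∈ Finset.range N, ∑ m ∈ I k, f m =
          ∑ m ∈ Finset.range M, if m ∈ I k then f m else 0 := by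
        intro k hk
        rw [← Finset.sum_filter, Finset.filter_mem_eq_inter,
          Finset.inter_eq_right.2 (hsub2 k hk)]
      rw [Finset.sum_congr rfl e1, Finset.sum_comm]
      refine Finset.sum_congr rfl fun m _ => ?_
      rw [← Finset.sum_filter, Finset.sum_const, nsmul_eq_mul]
    calc ∑ k ∈ Finset.range N, 1 / ω k
        ≤ ∑ m ∈ Finset.range M, ((Finset.range N).filter (fun k => m ∈ I k)).card * f m := by
          rw [← step2]; exact step1
      _ ≤ ∑ m ∈ Finset.range M, ((C : ℝ) + 1) * f m := by
          refine Finset.sum_le_sum fun m _ => ?_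
          refine mul_le_mul_of_nonneg_right ?_ (hf m)
          exact_mod_cast hcard N m
      _ = ((C : ℝ) + 1) * ∑ m ∈ Finset.range M, f m := by rw [← Finset.mul_sum]
      _ ≤ ((C : ℝ) + 1) * ∑' m, f m := by
          refine mul_le_mul_of_nonneg_left ?_ (by positivity)
          exact Summable.sum_le_tsum (Finset.range M) (fun i _ => hf i) hsum
  · -- main inequality
    intro n hn
    have hn1 : (1 : ℝ) ≤ (n : ℝ) := by exact_mod_cast hn
    set x := Real.logb b n with hx
    set y := Real.logb a n with hy
    have hx0 : 0 ≤ x := Real.logb_nonneg hb hn1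
    have hy0 : 0 ≤ y := Real.logb_nonneg ha hn1
    have hxy : y = x * c := by
      rw [hx, hy, hcdef, Real.logb, Real.logb, Real.logb]
      have hla : Real.log a ≠ 0 := ne_of_gt (Real.log_pos ha)
      have hlb : Real.log b ≠ 0 := ne_of_gt (Real.log_pos hb)
      field_simp
    set m := ⌊y⌋₊ with hm
    set k := ⌊x⌋₊ with hk
    have hm1 : (m : ℝ) ≤ y := Nat.floor_le hy0
    have hm2 : y < m + 1 := Nat.lt_floor_add_one y
    have hk1 : (k : ℝ) ≤ x := Nat.floor_le hx0
    have hk2 : x < k + 1 := Nat.lt_floor_add_one x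
    have hmem : m ∈ I k := by
      rw [hI]
      simp only [Finset.mem_Icc]
      constructor
      · have h1 : (k : ℝ) * c ≤ ((m + 1 : ℕ) : ℝ) := by
          push_cast
          nlinarith
        have := Nat.ceil_le.2 h1
        omega
      · have h2 : (m : ℝ) ≤ ((k : ℝ) + 1) * c := by nlinarith
        calc m = ⌈(m : ℝ)⌉₊ := (Nat.ceil_natCast m).symm
          _ ≤ ⌈((k : ℝ) + 1) * c⌉₊ := Nat.ceil_le_ceil h2
    exact Finset.inf'_le ψ hmem
end

section
/- The space of quasi-Hölder continuous functions H = {h ∈ L^∞(X, μ) : |h|_{ε₀} < ∞}, where |h|_{ε₀} = sup_{0<ε≤ε₀} (1/ε)·∫ osc(h, B(ε,x)) dμ(x), equipped with the norm ‖h‖_{ε₀} = |h|_∞ + |h|_{ε₀}, is a Banach space: every Cauchy sequence with respect to ‖·‖_{ε₀} converges in H. -/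
open MeasureTheory Filter
open scoped ENNReal

/-- Essential oscillation of `h` on the set `C`. -/
noncomputable def osc {α : Type*} [MeasurableSpace α] (μ : Measure α)
    (h : α → ℝ) (C : Set α) : ℝ :=
  essSup h (μ.restrict C) - essInf h (μ.restrict C)

/-- The quasi-Hölder seminorm `|h|_{ε₀} = sup_{0<ε≤ε₀} (1/ε)·∫ osc(h, B(ε,x)) dμ(x)`,
valued in `ℝ≥0∞`, for a family of balls `B`. -/
noncomputable def hSemi {α : Type*} [MeasurableSpace α] (μ : Measure α)
    (B : ℝ → α → Set α) (ε₀ : ℝ) (h : α → ℝ) : ℝ≥0∞ :=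
  ⨆ ε : Set.Ioc (0 : ℝ) ε₀,
    (∫⁻ x, ENNReal.ofReal (osc μ h (B ε.1 x)) ∂μ) / ENNReal.ofReal ε.1

/-- The quasi-Hölder norm `‖h‖_{ε₀} = |h|_∞ + |h|_{ε₀}` (in `ℝ≥0∞`). -/
noncomputable def hNorm {α : Type*} [MeasurableSpace α] (μ : Measure α)
    (B : ℝ → α → Set α) (ε₀ : ℝ) (h : α → ℝ) : ℝ≥0∞ :=
  eLpNorm h ⊤ μ + hSemi μ B ε₀ h

section Helpers

variable {α : Type*} [MeasurableSpace α] {μ : Measure α}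

lemma real_limsup_bot (f : α → ℝ) : limsup f (⊥ : Filter α) = 0 := by
  have h : {a : ℝ | ∀ᶠ n in Filter.map f ⊥, n ≤ a} = Set.univ := by
    ext a; simp
  simp only [limsup, limsSup, h]
  exact Real.sInf_of_not_bddBelow not_bddBelow_univ

lemma real_liminf_bot (f : α → ℝ) : liminf f (⊥ : Filter α) = 0 := by
  have h : {a : ℝ | ∀ᶠ n in Filter.map f ⊥, a ≤ n} = Set.univ := by
    ext a; simp
  simp only [liminf, limsInf, h]
  exact Real.sSup_of_not_bddAbove not_bddAbove_univ

lemma osc_of_restrict_zero (f : α → ℝ) (C : Set α) (hC : μ.restrict C = 0) :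
    osc μ f C = 0 := by
  unfold osc essSup essInf
  rw [hC, ae_zero, real_limsup_bot, real_liminf_bot, sub_zero]

lemma essSup_le_of_bound {ν : Measure α} (hν : ν ≠ 0) {f : α → ℝ} {b L : ℝ}
    (hb : ∀ᵐ x ∂ν, f x ≤ b) (hL : ∀ᵐ x ∂ν, L ≤ f x) : essSup f ν ≤ b := by
  haveI : (ae ν).NeBot := ae_neBot.mpr hν
  exact limsup_le_of_le (isCoboundedUnder_le_of_eventually_le _ hL) hb

lemma le_essInf_of_bound {ν : Measure α} (hν : ν ≠ 0) {f : α → ℝ} {b U : ℝ}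
    (hb : ∀ᵐ x ∂ν, b ≤ f x) (hU : ∀ᵐ x ∂ν, f x ≤ U) : b ≤ essInf f ν := by
  haveI : (ae ν).NeBot := ae_neBot.mpr hν
  exact le_liminf_of_le (isCoboundedUnder_ge_of_eventually_le _ hU) hb

/-- Lipschitz estimate: `osc f ≤ osc f' + 2c` when `|f - f'| ≤ c` a.e. and `f'` is
essentially bounded. -/
lemma osc_le_osc_add (f f' : α → ℝ) (C : Set α) {c M : ℝ} (hc : 0 ≤ c)
    (hdiff : ∀ᵐ x ∂μ, |f x - f' x| ≤ c) (hf' : ∀ᵐ x ∂μ, |f' x| ≤ M) :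
    osc μ f C ≤ osc μ f' C + 2 * c := by
  by_cases hC : μ.restrict C = 0
  · rw [osc_of_restrict_zero f C hC, osc_of_restrict_zero f' C hC]; linarith
  set ν := μ.restrict C with hν
  have hd : ∀ᵐ x ∂ν, |f x - f' x| ≤ c := ae_restrict_of_ae hdiff
  have hb : ∀ᵐ x ∂ν, |f' x| ≤ M := ae_restrict_of_ae hf'
  have hMb : ∀ᵐ x ∂ν, f' x ≤ essSup f' ν :=
    ae_le_essSup ⟨M, eventually_map.mpr (hb.mono fun x hx => (abs_le.1 hx).2)⟩
  have hmI : ∀ᵐ x ∂ν, essInf f' ν ≤ f' x :=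
    ae_essInf_le ⟨-M, eventually_map.mpr (hb.mono fun x hx => (abs_le.1 hx).1)⟩
  have h1 : essSup f ν ≤ essSup f' ν + c := by
    refine essSup_le_of_bound hC ?_ (L := -M - c) ?_
    · filter_upwards [hd, hMb] with x h1 h2
      obtain ⟨hA, hB⟩ := abs_le.1 h1
      linarith
    · filter_upwards [hd, hb] with x h1 h2
      obtain ⟨hA, hB⟩ := abs_le.1 h1
      obtain ⟨hA2, hB2⟩ := abs_le.1 h2
      linarith
  have h2 : essInf f' ν - c ≤ essInf f ν := by
    refine le_essInf_of_bound hC ?_ (U := M + c) ?_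
    · filter_upwards [hd, hmI] with x h1 h2
      obtain ⟨hA, hB⟩ := abs_le.1 h1
      linarith
    · filter_upwards [hd, hb] with x h1 h2
      obtain ⟨hA, hB⟩ := abs_le.1 h1
      obtain ⟨hA2, hB2⟩ := abs_le.1 h2
      linarith
  unfold osc
  linarith

/-- Subadditivity: `osc (u - v) ≤ osc u + osc v` for essentially bounded `u, v`. -/
lemma osc_sub_le (u v : α → ℝ) (C : Set α) {Mu Mv : ℝ}
    (hu : ∀ᵐ x ∂μ, |u x| ≤ Mu) (hv : ∀ᵐ x ∂μ, |v x| ≤ Mv) :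
    osc μ (fun x => u x - v x) C ≤ osc μ u C + osc μ v C := by
  by_cases hC : μ.restrict C = 0
  · rw [osc_of_restrict_zero _ C hC, osc_of_restrict_zero u C hC,
      osc_of_restrict_zero v C hC]; norm_num
  set ν := μ.restrict C with hν
  have hu' : ∀ᵐ x ∂ν, |u x| ≤ Mu := ae_restrict_of_ae hu
  have hv' : ∀ᵐ x ∂ν, |v x| ≤ Mv := ae_restrict_of_ae hv
  have hsu : ∀ᵐ x ∂ν, u x ≤ essSup u ν :=
    ae_le_essSup ⟨Mu, eventually_map.mpr (hu'.mono fun x hx => (abs_le.1 hx).2)⟩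
  have hiu : ∀ᵐ x ∂ν, essInf u ν ≤ u x :=
    ae_essInf_le ⟨-Mu, eventually_map.mpr (hu'.mono fun x hx => (abs_le.1 hx).1)⟩
  have hsv : ∀ᵐ x ∂ν, v x ≤ essSup v ν :=
    ae_le_essSup ⟨Mv, eventually_map.mpr (hv'.mono fun x hx => (abs_le.1 hx).2)⟩
  have hiv : ∀ᵐ x ∂ν, essInf v ν ≤ v x :=
    ae_essInf_le ⟨-Mv, eventually_map.mpr (hv'.mono fun x hx => (abs_le.1 hx).1)⟩
  have h1 : essSup (fun x => u x - v x) ν ≤ essSup u ν - essInf v ν := by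
    refine essSup_le_of_bound hC ?_ (L := -Mu - Mv) ?_
    · filter_upwards [hsu, hiv] with x h1 h2; linarith
    · filter_upwards [hu', hv'] with x h1 h2
      obtain ⟨hA, hB⟩ := abs_le.1 h1
      obtain ⟨hA2, hB2⟩ := abs_le.1 h2
      linarith
  have h2 : essInf u ν - essSup v ν ≤ essInf (fun x => u x - v x) ν := by
    refine le_essInf_of_bound hC ?_ (U := Mu + Mv) ?_
    · filter_upwards [hiu, hsv] with x h1 h2; linarith
    · filter_upwards [hu', hv'] with x h1 h2
      obtain ⟨hA, hB⟩ := abs_le.1 h1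
      obtain ⟨hA2, hB2⟩ := abs_le.1 h2
      linarith
  unfold osc
  linarith

lemma ae_abs_le_of_eLpNorm (f : α → ℝ) (hf : eLpNorm f ⊤ μ ≠ ⊤) :
    ∀ᵐ x ∂μ, |f x| ≤ (eLpNorm f ⊤ μ).toReal := by
  have h := enorm_ae_le_eLpNormEssSup f μ
  rw [eLpNorm_exponent_top] at hf ⊢
  filter_upwards [h] with x hx
  have := ENNReal.toReal_mono hf hx
  simpa [Real.norm_eq_abs] using this

lemma lintegral_osc_le_hSemi (B : ℝ → α → Set α) (ε₀ : ℝ) (f : α → ℝ) {ε : ℝ}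
    (hε : ε ∈ Set.Ioc (0 : ℝ) ε₀) :
    ∫⁻ x, ENNReal.ofReal (osc μ f (B ε x)) ∂μ ≤ hSemi μ B ε₀ f * ENNReal.ofReal ε := by
  have h := le_iSup (fun e : Set.Ioc (0 : ℝ) ε₀ =>
    (∫⁻ x, ENNReal.ofReal (osc μ f (B e.1 x)) ∂μ) / ENNReal.ofReal e.1) ⟨ε, hε⟩
  exact (ENNReal.div_le_iff (ENNReal.ofReal_pos.2 hε.1).ne' ENNReal.ofReal_ne_top).1 h

lemma hSemi_le_of (B : ℝ → α → Set α) (ε₀ : ℝ) (f : α → ℝ) (K : ℝ≥0∞)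
    (h : ∀ ε : ℝ, ε ∈ Set.Ioc (0 : ℝ) ε₀ →
      ∫⁻ x, ENNReal.ofReal (osc μ f (B ε x)) ∂μ ≤ K * ENNReal.ofReal ε) :
    hSemi μ B ε₀ f ≤ K :=
  iSup_le fun e =>
    (ENNReal.div_le_iff (ENNReal.ofReal_pos.2 e.2.1).ne' ENNReal.ofReal_ne_top).2 (h e.1 e.2)

end Helpers

/-- The space `H = {h ∈ L^∞ : |h|_{ε₀} < ∞}` of quasi-Hölder continuous
functions, with the norm `‖h‖_{ε₀} = |h|_∞ + |h|_{ε₀}`, is complete: every Cauchy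
sequence in `H` converges in `H` with respect to `‖·‖_{ε₀}`. -/
theorem stmt4 {α : Type*} [MeasurableSpace α] (μ : Measure α) [IsProbabilityMeasure μ]
    (B : ℝ → α → Set α) (ε₀ : ℝ) (hε₀ : ε₀ ∈ Set.Ioo (0 : ℝ) 1)
    (hBmeas : ∀ (h : α → ℝ) (ε : ℝ), Measurable fun x => osc μ h (B ε x))
    (h : ℕ → α → ℝ) (hmeas : ∀ n, Measurable (h n))
    (hbdd : ∀ n, eLpNorm (h n) ⊤ μ < ⊤)
    (hfin : ∀ n, hSemi μ B ε₀ (h n) < ⊤)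
    (hcauchy : ∀ δ : ℝ, 0 < δ → ∃ N : ℕ, ∀ p ≥ N, ∀ r ≥ N,
      hNorm μ B ε₀ (fun x => h p x - h r x) < ENNReal.ofReal δ) :
    ∃ g : α → ℝ, Measurable g ∧ eLpNorm g ⊤ μ < ⊤ ∧ hSemi μ B ε₀ g < ⊤ ∧
      Tendsto (fun n => hNorm μ B ε₀ (fun x => h n x - g x)) atTop (nhds 0) := by
  -- Step 1: construct the L∞ limit `g`.
  have mem : ∀ n, MemLp (h n) ⊤ μ := fun n => ⟨(hmeas n).aestronglyMeasurable, hbdd n⟩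
  haveI : Fact ((1 : ℝ≥0∞) ≤ ⊤) := ⟨le_top⟩
  set F : ℕ → Lp ℝ ⊤ μ := fun n => (mem n).toLp (h n) with hF
  have hFcauchy : CauchySeq F := by
    rw [Metric.cauchySeq_iff]
    intro δ hδ
    obtain ⟨N, hN⟩ := hcauchy δ hδ
    refine ⟨N, fun p hp r hr => ?_⟩
    have hlt : eLpNorm (h p - h r) ⊤ μ < ENNReal.ofReal δ := by
      calc eLpNorm (h p - h r) ⊤ μ
          ≤ hNorm μ B ε₀ (fun x => h p x - h r x) := self_le_add_right _ _
        _ < ENNReal.ofReal δ := hN p hp r hr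
    have hd : dist (F p) (F r) = (eLpNorm (h p - h r) ⊤ μ).toReal := by
      rw [dist_eq_norm, hF]
      rw [← MemLp.toLp_sub (mem p) (mem r)]
      exact Lp.norm_toLp _ _
    rw [hd]
    exact ENNReal.toReal_lt_of_lt_ofReal hlt
  obtain ⟨G, hG⟩ := cauchySeq_tendsto_of_complete hFcauchy
  set g : α → ℝ := ⇑G with hg
  have hgmeas : Measurable g := (Lp.stronglyMeasurable G).measurable
  have hglt : eLpNorm g ⊤ μ < ⊤ := Lp.eLpNorm_lt_top G
  set e : ℕ → ℝ≥0∞ := fun n => eLpNorm (fun x => h n x - g x) ⊤ μ with he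
  have heq : ∀ n, e n = ENNReal.ofReal ‖F n - G‖ := by
    intro n
    have h1 : ⇑(F n - G) =ᵐ[μ] fun x => h n x - g x := by
      filter_upwards [Lp.coeFn_sub (F n) G, (mem n).coeFn_toLp] with x hx hx2
      rw [hx]
      simp [hF] at hx2 ⊢
      rw [hx2]
    show eLpNorm (fun x => h n x - g x) ⊤ μ = ENNReal.ofReal ‖F n - G‖
    rw [← eLpNorm_congr_ae h1, Lp.norm_def, ENNReal.ofReal_toReal (Lp.eLpNorm_ne_top _)]
  have he0 : Tendsto e atTop (nhds 0) := by
    have h1 : Tendsto (fun n => ‖F n - G‖) atTop (nhds 0) :=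
      tendsto_iff_norm_sub_tendsto_zero.mp hG
    have h2 := (ENNReal.continuous_ofReal.tendsto 0).comp h1
    rw [show e = fun n => ENNReal.ofReal ‖F n - G‖ from funext heq]
    simpa [Function.comp_def] using h2
  have hent : ∀ n, e n ≠ ⊤ := fun n => by rw [heq]; exact ENNReal.ofReal_ne_top
  -- Step 2: the key estimate.
  have key : ∀ δ : ℝ, 0 < δ → ∃ N : ℕ, ∀ n ≥ N,
      eLpNorm (fun x => h n x - g x) ⊤ μ ≤ ENNReal.ofReal δ ∧
      hSemi μ B ε₀ (fun x => h n x - g x) ≤ ENNReal.ofReal δ := by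
    intro δ hδ
    obtain ⟨N, hN⟩ := hcauchy (δ / 2) (by positivity)
    refine ⟨N, fun n hn => ?_⟩
    have hEr : ∀ r ≥ N, eLpNorm (fun x => h n x - h r x) ⊤ μ < ENNReal.ofReal (δ / 2) :=
      fun r hr => lt_of_le_of_lt (self_le_add_right _ _) (hN n hn r hr)
    have hSr : ∀ r ≥ N, hSemi μ B ε₀ (fun x => h n x - h r x) ≤ ENNReal.ofReal (δ / 2) :=
      fun r hr => le_of_lt (lt_of_le_of_lt (le_add_self) (hN n hn r hr))
    have hhalf : ENNReal.ofReal (δ / 2) ≤ ENNReal.ofReal δ :=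
      ENNReal.ofReal_le_ofReal (by linarith)
    constructor
    · -- L∞ part
      have tri : ∀ r, eLpNorm (fun x => h n x - g x) ⊤ μ ≤
          eLpNorm (fun x => h n x - h r x) ⊤ μ + e r := by
        intro r
        have heqf : (fun x => h n x - g x) =
            (fun x => h n x - h r x) + fun x => h r x - g x := by
          funext x; simp only [Pi.add_apply]; ring
        rw [heqf]
        exact eLpNorm_add_le ((hmeas n).sub (hmeas r)).aestronglyMeasurable
          ((hmeas r).sub hgmeas).aestronglyMeasurable le_top
      have tendL : Tendsto (fun r => ENNReal.ofReal (δ / 2) + e r) atTop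
          (nhds (ENNReal.ofReal (δ / 2))) := by
        have := Tendsto.const_add (ENNReal.ofReal (δ / 2)) he0
        simpa using this
      refine le_trans (ge_of_tendsto tendL ?_) hhalf
      filter_upwards [eventually_ge_atTop N] with r hr
      exact le_trans (tri r) (add_le_add_left (hEr r hr).le _)
    · -- seminorm part
      refine le_trans ?_ hhalf
      apply hSemi_le_of
      intro ε hε
      have main : ∀ r ≥ N, ∫⁻ x, ENNReal.ofReal
            (osc μ (fun y => h n y - g y) (B ε x)) ∂μ
          ≤ ENNReal.ofReal (δ / 2) * ENNReal.ofReal ε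
            + ENNReal.ofReal (2 * (e r).toReal) := by
        intro r hr
        have hptw : ∀ x, osc μ (fun y => h n y - g y) (B ε x) ≤
            osc μ (fun y => h n y - h r y) (B ε x) + 2 * (e r).toReal := by
          intro x
          refine osc_le_osc_add _ _ _ ENNReal.toReal_nonneg ?_
            (ae_abs_le_of_eLpNorm _ (hEr r hr).ne_top)
          have hb := ae_abs_le_of_eLpNorm (fun y => h r y - g y) (hent r)
          filter_upwards [hb] with y hy
          have : (h n y - g y) - (h n y - h r y) = h r y - g y := by ring
          rw [this]
          exact hy
        calc ∫⁻ x, ENNReal.ofReal (osc μ (fun y => h n y - g y) (B ε x)) ∂μ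
            ≤ ∫⁻ x, (ENNReal.ofReal (osc μ (fun y => h n y - h r y) (B ε x))
                + ENNReal.ofReal (2 * (e r).toReal)) ∂μ := by
              refine lintegral_mono fun x => ?_
              exact le_trans (ENNReal.ofReal_le_ofReal (hptw x)) ENNReal.ofReal_add_le
          _ = (∫⁻ x, ENNReal.ofReal (osc μ (fun y => h n y - h r y) (B ε x)) ∂μ)
                + ENNReal.ofReal (2 * (e r).toReal) := by
              rw [lintegral_add_right _ measurable_const, lintegral_const, measure_univ,
                mul_one]
          _ ≤ ENNReal.ofReal (δ / 2) * ENNReal.ofReal ε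
                + ENNReal.ofReal (2 * (e r).toReal) := by
              refine add_le_add_left ?_ _
              refine le_trans (lintegral_osc_le_hSemi B ε₀ _ hε) ?_
              exact mul_le_mul_left (hSr r hr) _
      have tend : Tendsto (fun r => ENNReal.ofReal (δ / 2) * ENNReal.ofReal ε
            + ENNReal.ofReal (2 * (e r).toReal)) atTop
          (nhds (ENNReal.ofReal (δ / 2) * ENNReal.ofReal ε)) := by
        have h1 : Tendsto (fun r => (e r).toReal) atTop (nhds 0) := by
          have := (ENNReal.tendsto_toReal (a := 0) (by simp)).comp he0
          exact this
        have h2 : Tendsto (fun r => ENNReal.ofReal (2 * (e r).toReal)) atTop (nhds 0) := by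
          have h1' := h1.const_mul (2 : ℝ)
          rw [mul_zero] at h1'
          have h3 := (ENNReal.continuous_ofReal.tendsto 0).comp h1'
          simpa [Function.comp_def] using h3
        have hc' : Tendsto (fun _ : ℕ => ENNReal.ofReal (δ / 2) * ENNReal.ofReal ε)
            atTop (nhds (ENNReal.ofReal (δ / 2) * ENNReal.ofReal ε)) := tendsto_const_nhds
        have := hc'.add h2
        simpa using this
      refine ge_of_tendsto tend ?_
      filter_upwards [eventually_ge_atTop N] with r hr
      exact main r hr
  -- Step 3: conclude.
  refine ⟨g, hgmeas, hglt, ?_, ?_⟩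
  · -- hSemi g < ⊤
    obtain ⟨N, hK⟩ := key 1 one_pos
    obtain ⟨hK1, hK2⟩ := hK N le_rfl
    have hsub : hSemi μ B ε₀ g ≤ hSemi μ B ε₀ (h N)
        + hSemi μ B ε₀ (fun x => h N x - g x) := by
      apply hSemi_le_of
      intro ε hε
      have hptw : ∀ x, osc μ g (B ε x) ≤ osc μ (h N) (B ε x)
          + osc μ (fun y => h N y - g y) (B ε x) := by
        intro x
        have heqf : g = fun y => h N y - (h N y - g y) := by funext y; ring
        calc osc μ g (B ε x) = osc μ (fun y => h N y - (h N y - g y)) (B ε x) := by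
              rw [← heqf]
          _ ≤ osc μ (h N) (B ε x) + osc μ (fun y => h N y - g y) (B ε x) :=
              osc_sub_le _ _ _ (ae_abs_le_of_eLpNorm _ (hbdd N).ne_top)
                (ae_abs_le_of_eLpNorm _
                  (lt_of_le_of_lt hK1 ENNReal.ofReal_lt_top).ne_top)
      calc ∫⁻ x, ENNReal.ofReal (osc μ g (B ε x)) ∂μ
          ≤ ∫⁻ x, (ENNReal.ofReal (osc μ (h N) (B ε x))
              + ENNReal.ofReal (osc μ (fun y => h N y - g y) (B ε x))) ∂μ := by
            refine lintegral_mono fun x => ?_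
            exact le_trans (ENNReal.ofReal_le_ofReal (hptw x)) ENNReal.ofReal_add_le
        _ = (∫⁻ x, ENNReal.ofReal (osc μ (h N) (B ε x)) ∂μ)
              + ∫⁻ x, ENNReal.ofReal (osc μ (fun y => h N y - g y) (B ε x)) ∂μ := by
            rw [lintegral_add_right _ ((hBmeas _ _).ennreal_ofReal)]
        _ ≤ hSemi μ B ε₀ (h N) * ENNReal.ofReal ε
              + hSemi μ B ε₀ (fun y => h N y - g y) * ENNReal.ofReal ε :=
            add_le_add (lintegral_osc_le_hSemi B ε₀ _ hε) (lintegral_osc_le_hSemi B ε₀ _ hε)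
        _ = (hSemi μ B ε₀ (h N) + hSemi μ B ε₀ (fun y => h N y - g y))
              * ENNReal.ofReal ε := by rw [add_mul]
    refine lt_of_le_of_lt hsub ?_
    exact ENNReal.add_lt_top.2 ⟨hfin N, lt_of_le_of_lt hK2 ENNReal.ofReal_lt_top⟩
  · -- Tendsto
    rw [ENNReal.tendsto_atTop_zero]
    intro ε' hε'
    obtain ⟨δ, hδpos, hδle⟩ : ∃ δ : ℝ, 0 < δ ∧
        ENNReal.ofReal δ + ENNReal.ofReal δ ≤ ε' := by
      rcases eq_or_ne ε' ⊤ with h | h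
      · exact ⟨1, one_pos, by simp [h]⟩
      · have hpos : 0 < ε'.toReal := ENNReal.toReal_pos hε'.ne' h
        refine ⟨ε'.toReal / 2, by positivity, ?_⟩
        rw [← ENNReal.ofReal_add (by positivity) (by positivity)]
        rw [add_halves, ENNReal.ofReal_toReal h]
    obtain ⟨N, hK⟩ := key δ hδpos
    refine ⟨N, fun n hn => ?_⟩
    obtain ⟨h1, h2⟩ := hK n hn
    calc hNorm μ B ε₀ (fun x => h n x - g x)
        = eLpNorm (fun x => h n x - g x) ⊤ μ
          + hSemi μ B ε₀ (fun x => h n x - g x) := rfl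
      _ ≤ ENNReal.ofReal δ + ENNReal.ofReal δ := add_le_add h1 h2
      _ ≤ ε' := hδle
end

section
/- Under the hypotheses of the Gibbs cylinder-decay lemma, there exist ε₀, s ∈ (0,1) and L ∈ ℕ such that for all ℓ ≥ L, every admissible word A of length ℓ, every x ∈ X with Ax admissible, and every ε ∈ (0, ε₀]: [A] ∩ σ^{−ℓ}(B(ε, x)) ⊆ B(s·ε, Ax), where B(ε, x) is the ball in the metric d₂(x,y) = inf{μ(C) : x,y ∈ C, C a cylinder}. -/
open MeasureTheory
open scoped ENNReal

/-- A sequence is admissible for the transition matrix `A`. -/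
def Adm {𝔸 : Type*} (A : 𝔸 → 𝔸 → Bool) (x : ℕ → 𝔸) : Prop :=
  ∀ n, A (x n) (x (n + 1)) = true

/-- The cylinder set of the word `w 0 … w (n-1)` inside the subshift. -/
def cylinder {𝔸 : Type*} (A : 𝔸 → 𝔸 → Bool) (w : ℕ → 𝔸) (n : ℕ) :
    Set {x : ℕ → 𝔸 // Adm A x} :=
  {x | ∀ i < n, x.1 i = w i}

/-- Birkhoff sum `S_n f = Σ_{k=0}^{n-1} f ∘ σ^k` along the shift on sequences. -/
noncomputable def birk {𝔸 : Type*} (f : (ℕ → 𝔸) → ℝ) (n : ℕ) (x : ℕ → 𝔸) : ℝ :=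
  ∑ k ∈ Finset.range n, f (fun i => x (i + k))

/-- `μ` is a Gibbs measure (with constant `C = 0`) with Gibbs constant `K` for `f`. -/
def IsGibbs {𝔸 : Type*} (A : 𝔸 → 𝔸 → Bool) [MeasurableSpace 𝔸]
    (μ : Measure {x : ℕ → 𝔸 // Adm A x}) (f : (ℕ → 𝔸) → ℝ) (K : ℝ) : Prop :=
  ∀ (n : ℕ) (w : ℕ → 𝔸) (x : {x : ℕ → 𝔸 // Adm A x}), x ∈ cylinder A w n →
    ENNReal.ofReal (K⁻¹ * Real.exp (birk f n x.1)) ≤ μ (cylinder A w n) ∧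
    μ (cylinder A w n) ≤ ENNReal.ofReal (K * Real.exp (birk f n x.1))

/-- Prepending a symbol to a sequence. -/
def extend {𝔸 : Type*} (a : 𝔸) (x : ℕ → 𝔸) : ℕ → 𝔸 := fun n => Nat.casesOn n a x

/-- `e^f` is a g-function: the sum of `e^{f(y)}` over preimages `y` of `x` is 1. -/
def IsGFunc {𝔸 : Type*} [Fintype 𝔸] (A : 𝔸 → 𝔸 → Bool) (f : (ℕ → 𝔸) → ℝ) : Prop :=
  ∀ x : ℕ → 𝔸, Adm A x →
    ∑ a ∈ Finset.univ.filter (fun a => A a (x 0) = true), Real.exp (f (extend a x)) = 1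

/-- `f` is Lipschitz with respect to the metric `d₁(x,y) = θ^{common prefix length}`. -/
def LipOnShift {𝔸 : Type*} (A : 𝔸 → 𝔸 → Bool) (f : (ℕ → 𝔸) → ℝ) : Prop :=
  ∃ C θ : ℝ, 0 < θ ∧ θ < 1 ∧ ∀ x y : ℕ → 𝔸, Adm A x → Adm A y →
    ∀ n : ℕ, (∀ i ≤ n, x i = y i) → |f x - f y| ≤ C * θ ^ n

/-- `A` is irreducible and aperiodic (equivalently: primitive). -/
def Primitive {𝔸 : Type*} (A : 𝔸 → 𝔸 → Bool) : Prop :=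
  ∃ N : ℕ, 0 < N ∧ ∀ i j : 𝔸, ∃ w : ℕ → 𝔸, w 0 = i ∧ w N = j ∧
    ∀ k < N, A (w k) (w (k + 1)) = true


/-- The measure-metric `d₂(x,y) = inf{μ(C) : x, y ∈ C, C a cylinder}` (in `ℝ≥0∞`). -/
noncomputable def d2 {𝔸 : Type*} (A : 𝔸 → 𝔸 → Bool) [MeasurableSpace 𝔸]
    (μ : Measure {x : ℕ → 𝔸 // Adm A x}) (x y : {x : ℕ → 𝔸 // Adm A x}) : ℝ≥0∞ :=
  ⨅ (n : ℕ) (_ : ∀ i < n, x.1 i = y.1 i), μ (cylinder A x.1 n)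

/-- The ball of radius `ε` around `x` in the metric `d₂`. -/
def ball {𝔸 : Type*} (A : 𝔸 → 𝔸 → Bool) [MeasurableSpace 𝔸]
    (μ : Measure {x : ℕ → 𝔸 // Adm A x}) (ε : ℝ) (x : {x : ℕ → 𝔸 // Adm A x}) :
    Set {x : ℕ → 𝔸 // Adm A x} :=
  {y | d2 A μ x y < ENNReal.ofReal ε}

/-- The left shift `σ` on the subshift. -/
def shiftX {𝔸 : Type*} (A : 𝔸 → 𝔸 → Bool) :
    {x : ℕ → 𝔸 // Adm A x} → {x : ℕ → 𝔸 // Adm A x} :=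
  fun x => ⟨fun n => x.1 (n + 1), fun n => x.2 (n + 1)⟩

/-- Concatenation `Ax` of a word `w` of length `ℓ` with a sequence `x`. -/
def concat {𝔸 : Type*} (w : ℕ → 𝔸) (ℓ : ℕ) (x : ℕ → 𝔸) : ℕ → 𝔸 :=
  fun i => if i < ℓ then w i else x (i - ℓ)

section Aux

variable {𝔸 : Type*}

lemma adm_shift {A : 𝔸 → 𝔸 → Bool} {z : ℕ → 𝔸} (hz : Adm A z) (m : ℕ) :
    Adm A (fun i => z (i + m)) := by
  intro n
  have h := hz (n + m)
  have e : n + m + 1 = n + 1 + m := by omega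
  rw [e] at h
  exact h

lemma adm_extend {A : 𝔸 → 𝔸 → Bool} {x : ℕ → 𝔸} {a : 𝔸} (ha : A a (x 0) = true)
    (hx : Adm A x) : Adm A (extend a x) := by
  intro n
  cases n with
  | zero => exact ha
  | succ m => exact hx m

lemma extend_shift' (z : ℕ → 𝔸) (k : ℕ) :
    extend (z k) (fun i => z (i + (k + 1))) = fun i => z (i + k) := by
  funext i
  cases i with
  | zero => show z k = z (0 + k); congr 1; omega
  | succ n => show z (n + (k + 1)) = z (n + 1 + k); congr 1; omega

lemma extend_shift (z : ℕ → 𝔸) : extend (z 0) (fun i => z (i + 1)) = z := by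
  have h := extend_shift' z 0
  simpa using h

lemma birk_add (f : (ℕ → 𝔸) → ℝ) (m n : ℕ) (z : ℕ → 𝔸) :
    birk f (m + n) z = birk f m z + birk f n (fun i => z (i + m)) := by
  induction n with
  | zero => simp [birk]
  | succ p ih =>
    have e : m + (p + 1) = (m + p) + 1 := by omega
    rw [e]
    unfold birk at *
    rw [Finset.sum_range_succ, ih, Finset.sum_range_succ]
    have : (fun i => z (i + (m + p))) = (fun i => (fun j => z (j + m)) (i + p)) := by
      funext i; congr 1; omega
    rw [this, add_assoc]

lemma iter_shiftX {A : 𝔸 → 𝔸 → Bool} (y : {x : ℕ → 𝔸 // Adm A x}) (ℓ : ℕ) :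
    ((shiftX A)^[ℓ] y).1 = fun i => y.1 (i + ℓ) := by
  induction ℓ with
  | zero => simp
  | succ m ih =>
    rw [Function.iterate_succ_apply']
    funext i
    show ((shiftX A)^[m] y).1 (i + 1) = y.1 (i + (m + 1))
    rw [ih]
    show y.1 (i + 1 + m) = y.1 (i + (m + 1))
    have e : i + 1 + m = i + (m + 1) := by omega
    rw [e]

-- f is ≤ 0 on admissible sequences
lemma exp_f_le_one {A : 𝔸 → 𝔸 → Bool} [Fintype 𝔸] {f : (ℕ → 𝔸) → ℝ}
    (hg : IsGFunc A f) {z : ℕ → 𝔸} (hz : Adm A z) : Real.exp (f z) ≤ 1 := by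
  have h := hg (fun i => z (i + 1)) (adm_shift hz 1)
  have hmem : z 0 ∈ Finset.univ.filter
      (fun a => A a ((fun i => z (i + 1)) 0) = true) := by
    simp only [Finset.mem_filter, Finset.mem_univ, true_and]
    exact hz 0
  calc Real.exp (f z)
      = Real.exp (f (extend (z 0) (fun i => z (i + 1)))) := by rw [extend_shift]
    _ ≤ ∑ a ∈ Finset.univ.filter (fun a => A a ((fun i => z (i + 1)) 0) = true),
          Real.exp (f (extend a (fun i => z (i + 1)))) :=
        Finset.single_le_sum (f := fun a => Real.exp (f (extend a (fun i => z (i + 1))))) (fun a _ => (Real.exp_pos _).le) hmem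
    _ = 1 := h

lemma f_nonpos {A : 𝔸 → 𝔸 → Bool} [Fintype 𝔸] {f : (ℕ → 𝔸) → ℝ}
    (hg : IsGFunc A f) {z : ℕ → 𝔸} (hz : Adm A z) : f z ≤ 0 :=
  Real.exp_le_one_iff.mp (exp_f_le_one hg hz)

end Aux
section Aux2

variable {𝔸 : Type*}

/-- Every symbol starts some admissible sequence (periodic point from primitivity). -/
lemma exists_adm_start {A : 𝔸 → 𝔸 → Bool} (hp : Primitive A) (a : 𝔸) :
    ∃ p : ℕ → 𝔸, Adm A p ∧ p 0 = a := by
  obtain ⟨N, hN, hpath⟩ := hp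
  obtain ⟨w, hw0, hwN, hstep⟩ := hpath a a
  refine ⟨fun i => w (i % N), ?_, ?_⟩
  · intro n
    have h1 : n % N < N := Nat.mod_lt _ hN
    have hsplit : n + 1 = N * (n / N) + (n % N + 1) := by
      have := Nat.div_add_mod n N
      omega
    by_cases h : n % N + 1 < N
    · have e : (n + 1) % N = n % N + 1 := by
        rw [hsplit, Nat.mul_add_mod]
        exact Nat.mod_eq_of_lt h
      show A (w (n % N)) (w ((n + 1) % N)) = true
      rw [e]
      exact hstep _ h1
    · have h2 : n % N + 1 = N := by omega
      have e : (n + 1) % N = 0 := by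
        rw [hsplit, Nat.mul_add_mod, h2, Nat.mod_self]
      show A (w (n % N)) (w ((n + 1) % N)) = true
      rw [e]
      have hs := hstep (n % N) h1
      rw [h2, hwN, ← hw0] at hs
      exact hs
  · show w (0 % N) = a
    rw [Nat.zero_mod, hw0]

/-- `f` is bounded on admissible sequences. -/
lemma f_bounded [Fintype 𝔸] [Nonempty 𝔸] {A : 𝔸 → 𝔸 → Bool} (hp : Primitive A)
    {f : (ℕ → 𝔸) → ℝ} (hlip : LipOnShift A f) :
    ∃ M : ℝ, 1 ≤ M ∧ ∀ z : ℕ → 𝔸, Adm A z → |f z| ≤ M := by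
  obtain ⟨C, θ, hθ0, hθ1, hC⟩ := hlip
  choose P hPadm hP0 using fun a => exists_adm_start hp a
  set M₀ : ℝ := Finset.univ.sup' (Finset.univ_nonempty) (fun a => |f (P a)|) with hM₀
  refine ⟨max 1 (|C| + M₀), le_max_left _ _, ?_⟩
  intro z hz
  have hagree : ∀ i ≤ 0, z i = P (z 0) i := by
    intro i hi
    interval_cases i
    exact (hP0 (z 0)).symm
  have h1 : |f z - f (P (z 0))| ≤ C * θ ^ 0 := hC z (P (z 0)) hz (hPadm (z 0)) 0 hagree
  have h2 : C * θ ^ 0 ≤ |C| := by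
    rw [pow_zero, mul_one]; exact le_abs_self C
  have h3 : |f (P (z 0))| ≤ M₀ :=
    Finset.le_sup' (fun a => |f (P a)|) (Finset.mem_univ (z 0))
  have : |f z| ≤ |f z - f (P (z 0))| + |f (P (z 0))| := by
    calc |f z| = |(f z - f (P (z 0))) + f (P (z 0))| := by rw [sub_add_cancel]
      _ ≤ _ := abs_add_le _ _
  calc |f z| ≤ |f z - f (P (z 0))| + |f (P (z 0))| := this
    _ ≤ |C| + M₀ := add_le_add (h1.trans h2) h3
    _ ≤ max 1 (|C| + M₀) := le_max_right _ _

end Aux2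
section Aux3

variable {𝔸 : Type*}

/-- Along any admissible sequence, within the primitivity window some symbol has two
distinct predecessors. -/
lemma exists_two_pred [Fintype 𝔸] {A : 𝔸 → 𝔸 → Bool} (hcard : 2 ≤ Fintype.card 𝔸)
    {N : ℕ} (hN : 0 < N)
    (hpath : ∀ i j : 𝔸, ∃ w : ℕ → 𝔸, w 0 = i ∧ w N = j ∧ ∀ k < N, A (w k) (w (k + 1)) = true)
    {z : ℕ → 𝔸} (hz : Adm A z) :
    ∃ k, 1 ≤ k ∧ k ≤ N ∧ ∃ a, a ≠ z (k - 1) ∧ A a (z k) = true := by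
  by_contra hcon
  push_neg at hcon
  obtain ⟨i, hi⟩ : ∃ i : 𝔸, i ≠ z 0 := Fintype.exists_ne_of_one_lt_card (by omega) (z 0)
  obtain ⟨w, hw0, hwN, hstep⟩ := hpath i (z N)
  have key : ∀ j, j ≤ N → w (N - j) = z (N - j) := by
    intro j
    induction j with
    | zero => intro _; simpa using hwN
    | succ m ih =>
      intro hm
      have h1 := ih (by omega)
      have h3 := hstep (N - (m + 1)) (by omega)
      have e : N - (m + 1) + 1 = N - m := by omega
      rw [e, h1] at h3
      have h4 := hcon (N - m) (by omega) (by omega) (w (N - (m + 1)))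
      by_contra hne
      have hne' : w (N - (m + 1)) ≠ z (N - m - 1) := by
        have e2 : N - m - 1 = N - (m + 1) := by omega
        rw [e2]; exact hne
      exact (h4 hne') h3
  have := key N (le_refl N)
  rw [Nat.sub_self, hw0] at this
  exact hi this

/-- Two-term bound from the g-function identity. -/
lemma two_term_le_one [Fintype 𝔸] {A : 𝔸 → 𝔸 → Bool} {f : (ℕ → 𝔸) → ℝ}
    (hg : IsGFunc A f) {x : ℕ → 𝔸} (hx : Adm A x) {a b : 𝔸} (hab : a ≠ b)
    (ha : A a (x 0) = true) (hb : A b (x 0) = true) :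
    Real.exp (f (extend a x)) + Real.exp (f (extend b x)) ≤ 1 := by
  haveI := Classical.decEq 𝔸
  have h := hg x hx
  rw [← h]
  have hsub : ({a, b} : Finset 𝔸) ⊆ Finset.univ.filter (fun c => A c (x 0) = true) := by
    intro c hc
    simp only [Finset.mem_insert, Finset.mem_singleton] at hc
    rcases hc with rfl | rfl <;> simp [ha, hb]
  calc Real.exp (f (extend a x)) + Real.exp (f (extend b x))
      = ∑ c ∈ ({a, b} : Finset 𝔸), Real.exp (f (extend c x)) := by
        rw [Finset.sum_pair hab]
    _ ≤ _ := Finset.sum_le_sum_of_subset_of_nonneg hsub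
        (fun c _ _ => (Real.exp_pos _).le)

/-- Uniform contraction over one primitivity window. -/
lemma window_decay [Fintype 𝔸] {A : 𝔸 → 𝔸 → Bool} {f : (ℕ → 𝔸) → ℝ}
    (hg : IsGFunc A f) (hcard : 2 ≤ Fintype.card 𝔸)
    {N : ℕ} (hN : 0 < N)
    (hpath : ∀ i j : 𝔸, ∃ w : ℕ → 𝔸, w 0 = i ∧ w N = j ∧ ∀ k < N, A (w k) (w (k + 1)) = true)
    {M : ℝ} (hM : ∀ z : ℕ → 𝔸, Adm A z → |f z| ≤ M)
    {z : ℕ → 𝔸} (hz : Adm A z) :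
    Real.exp (birk f N z) ≤ 1 - Real.exp (-M) := by
  obtain ⟨k, hk1, hkN, a, hane, haA⟩ := exists_two_pred hcard hN hpath hz
  set v : ℕ → 𝔸 := fun i => z (i + k) with hv
  have hvadm : Adm A v := adm_shift hz k
  have hv0 : v 0 = z k := by simp [hv]
  -- the factor exp (f (σ^{k-1} z)) is ≤ 1 - exp (-M)
  have hbA : A (z (k - 1)) (z k) = true := by
    have := hz (k - 1)
    have e : k - 1 + 1 = k := by omega
    rw [e] at this
    exact this
  have htwo : Real.exp (f (extend a v)) + Real.exp (f (extend (z (k - 1)) v)) ≤ 1 := by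
    apply two_term_le_one hg hvadm hane
    · rw [hv0]; exact haA
    · rw [hv0]; exact hbA
  have hextb : extend (z (k - 1)) v = fun i => z (i + (k - 1)) := by
    have e : k - 1 + 1 = k := by omega
    have := extend_shift' z (k - 1)
    rw [e] at this
    exact this
  have hea : Real.exp (-M) ≤ Real.exp (f (extend a v)) := by
    apply Real.exp_le_exp.mpr
    have hadm : Adm A (extend a v) := adm_extend (by rw [hv0]; exact haA) hvadm
    have := hM _ hadm
    have := abs_le.mp this
    linarith [this.1]
  have hfac : Real.exp (f (fun i => z (i + (k - 1)))) ≤ 1 - Real.exp (-M) := by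
    rw [← hextb]
    linarith
  -- now bound the Birkhoff sum by this single factor
  have hmem : k - 1 ∈ Finset.range N := Finset.mem_range.mpr (by omega)
  have hsum : birk f N z ≤ f (fun i => z (i + (k - 1))) := by
    unfold birk
    rw [← Finset.sum_erase_add _ _ hmem]
    have hrest : ∑ j ∈ (Finset.range N).erase (k - 1), f (fun i => z (i + j)) ≤ 0 := by
      apply Finset.sum_nonpos
      intro j _
      exact f_nonpos hg (adm_shift hz j)
    linarith
  calc Real.exp (birk f N z) ≤ Real.exp (f (fun i => z (i + (k - 1)))) :=
        Real.exp_le_exp.mpr hsum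
    _ ≤ 1 - Real.exp (-M) := hfac

end Aux3
section Aux4

variable {𝔸 : Type*}

/-- Geometric decay of `exp (S_ℓ f)` along admissible sequences. -/
lemma birk_decay [Fintype 𝔸] {A : 𝔸 → 𝔸 → Bool} {f : (ℕ → 𝔸) → ℝ}
    (hg : IsGFunc A f) {N : ℕ} (hN : 0 < N) {ρ : ℝ} (hρ0 : 0 < ρ)
    (hwin : ∀ z : ℕ → 𝔸, Adm A z → Real.exp (birk f N z) ≤ ρ) :
    ∀ ℓ : ℕ, ∀ z : ℕ → 𝔸, Adm A z → Real.exp (birk f ℓ z) ≤ ρ ^ (ℓ / N) := by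
  intro ℓ
  induction ℓ using Nat.strong_induction_on with
  | _ ℓ ih =>
    intro z hz
    by_cases h : ℓ < N
    · rw [Nat.div_eq_of_lt h, pow_zero]
      have : birk f ℓ z ≤ 0 := by
        unfold birk
        apply Finset.sum_nonpos
        intro j _
        exact f_nonpos hg (adm_shift hz j)
      exact Real.exp_le_one_iff.mpr this
    · push_neg at h
      have hsplit : ℓ = N + (ℓ - N) := by omega
      have hdiv : ℓ / N = (ℓ - N) / N + 1 := Nat.div_eq_sub_div hN h
      rw [hsplit, birk_add, Real.exp_add]
      have h1 : Real.exp (birk f N z) ≤ ρ := hwin z hz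
      have h2 : Real.exp (birk f (ℓ - N) (fun i => z (i + N))) ≤ ρ ^ ((ℓ - N) / N) :=
        ih (ℓ - N) (by omega) _ (adm_shift hz N)
      calc Real.exp (birk f N z) * Real.exp (birk f (ℓ - N) (fun i => z (i + N)))
          ≤ ρ * ρ ^ ((ℓ - N) / N) :=
            mul_le_mul h1 h2 (Real.exp_pos _).le hρ0.le
        _ = ρ ^ ((N + (ℓ - N)) / N) := by rw [← hsplit, hdiv, pow_succ, mul_comm]

end Aux4
/-- There exist `ε₀, s ∈ (0,1)` and `L ∈ ℕ` such that for all `ℓ ≥ L`, every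
admissible word `A` of length `ℓ`, every `x` with `Ax` admissible and `ε ∈ (0, ε₀]`:
`[A] ∩ σ^{-ℓ}(B(ε,x)) ⊆ B(s·ε, Ax)`, where balls are in the measure-metric `d₂`. -/
theorem stmt8 {𝔸 : Type*} [Fintype 𝔸] [MeasurableSpace 𝔸]
    (A : 𝔸 → 𝔸 → Bool) (hcard : 2 ≤ Fintype.card 𝔸) (hprim : Primitive A)
    (f : (ℕ → 𝔸) → ℝ) (hlip : LipOnShift A f) (hgfunc : IsGFunc A f)
    (μ : Measure {x : ℕ → 𝔸 // Adm A x}) [IsProbabilityMeasure μ]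
    (K : ℝ) (hK : 0 < K) (hGibbs : IsGibbs A μ f K) :
    ∃ (ε₀ s : ℝ) (L : ℕ), ε₀ ∈ Set.Ioo (0 : ℝ) 1 ∧ s ∈ Set.Ioo (0 : ℝ) 1 ∧
      ∀ ℓ : ℕ, L ≤ ℓ → ∀ (w : ℕ → 𝔸) (x : {x : ℕ → 𝔸 // Adm A x})
        (hadm : Adm A (concat w ℓ x.1)), ∀ ε : ℝ, 0 < ε → ε ≤ ε₀ →
        ∀ y : {x : ℕ → 𝔸 // Adm A x}, (∀ i < ℓ, y.1 i = w i) →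
          (shiftX A)^[ℓ] y ∈ ball A μ ε x →
          y ∈ ball A μ (s * ε) ⟨concat w ℓ x.1, hadm⟩ := by
  haveI : Nonempty 𝔸 := Fintype.card_pos_iff.mp (by omega)
  obtain ⟨N, hN, hpath⟩ := hprim
  obtain ⟨M, hM1, hM⟩ := f_bounded ⟨N, hN, hpath⟩ hlip
  set ρ : ℝ := 1 - Real.exp (-M) with hρdef
  have hρ0 : 0 < ρ := by
    have h1 : Real.exp (-M) < Real.exp 0 := Real.exp_lt_exp.mpr (by linarith)
    rw [Real.exp_zero] at h1
    simp only [hρdef]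
    linarith
  have hρ1 : ρ < 1 := by
    have := Real.exp_pos (-M)
    simp only [hρdef]
    linarith
  have hwin : ∀ z : ℕ → 𝔸, Adm A z → Real.exp (birk f N z) ≤ ρ :=
    fun z hz => window_decay hgfunc hcard hN hpath hM hz
  have hdecay := birk_decay hgfunc hN hρ0 hwin
  obtain ⟨m, hm⟩ := exists_pow_lt_of_lt_one
    (show (0:ℝ) < (2 * K ^ 2)⁻¹ by positivity) hρ1
  refine ⟨1/2, 1/2, N * m, ⟨by norm_num, by norm_num⟩, ⟨by norm_num, by norm_num⟩, ?_⟩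
  intro ℓ hL w x hadm ε hε hε0 y hyw hball
  -- extract a small common cylinder of x and σ^ℓ y from the ball membership
  rw [ball, Set.mem_setOf_eq, d2, iInf_lt_iff] at hball
  obtain ⟨n, hball⟩ := hball
  rw [iInf_lt_iff] at hball
  obtain ⟨hcond, hlt⟩ := hball
  set σy := (shiftX A)^[ℓ] y with hσydef
  have hσy1 : σy.1 = fun i => y.1 (i + ℓ) := iter_shiftX y ℓ
  -- Gibbs lower bound on the common cylinder
  have hmem1 : σy ∈ cylinder A x.1 n := fun i hi => (hcond i hi).symm
  have hgl := (hGibbs n x.1 σy hmem1).1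
  have hlt3 : K⁻¹ * Real.exp (birk f n σy.1) < ε :=
    (ENNReal.ofReal_lt_ofReal_iff hε).mp (lt_of_le_of_lt hgl hlt)
  have hexpn : Real.exp (birk f n σy.1) < K * ε := by
    have h := mul_lt_mul_of_pos_left hlt3 hK
    rwa [← mul_assoc, mul_inv_cancel₀ (ne_of_gt hK), one_mul] at h
  -- y lies in the cylinder of `concat w ℓ x.1` of length ℓ + n
  have hmem2 : y ∈ cylinder A (concat w ℓ x.1) (ℓ + n) := by
    intro i hi
    show y.1 i = concat w ℓ x.1 i
    by_cases h : i < ℓ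
    · rw [concat]
      simp only [if_pos h]
      exact hyw i h
    · rw [concat]
      simp only [if_neg h]
      push_neg at h
      have h2 : i - ℓ < n := by omega
      rw [(hcond (i - ℓ) h2), hσy1]
      have e : i - ℓ + ℓ = i := by omega
      show y.1 i = y.1 (i - ℓ + ℓ)
      rw [e]
  have hgu := (hGibbs (ℓ + n) (concat w ℓ x.1) y hmem2).2
  -- d2 from Ax to y is at most the measure of the big cylinder
  have hd2 : d2 A μ ⟨concat w ℓ x.1, hadm⟩ y ≤ μ (cylinder A (concat w ℓ x.1) (ℓ + n)) := by
    rw [d2]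
    exact iInf₂_le (ℓ + n) (fun i hi => (hmem2 i hi).symm)
  -- quantitative estimate
  have hsplit : birk f (ℓ + n) y.1 = birk f ℓ y.1 + birk f n σy.1 := by
    rw [birk_add, hσy1]
  have hbℓ : Real.exp (birk f ℓ y.1) ≤ ρ ^ (ℓ / N) := hdecay ℓ y.1 y.2
  have hmℓ : m ≤ ℓ / N := by
    rw [Nat.le_div_iff_mul_le hN, Nat.mul_comm]
    exact hL
  have hρℓ : ρ ^ (ℓ / N) ≤ ρ ^ m := pow_le_pow_of_le_one hρ0.le hρ1.le hmℓ
  have hreal : K * Real.exp (birk f (ℓ + n) y.1) < 1/2 * ε := by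
    rw [hsplit, Real.exp_add]
    have h1 : Real.exp (birk f ℓ y.1) * Real.exp (birk f n σy.1) < ρ ^ m * (K * ε) :=
      mul_lt_mul' (hbℓ.trans hρℓ) hexpn (Real.exp_pos _).le (by positivity)
    have h4 : 2 * K ^ 2 * ρ ^ m ≤ 1 := by
      calc 2 * K ^ 2 * ρ ^ m ≤ 2 * K ^ 2 * (2 * K ^ 2)⁻¹ :=
            mul_le_mul_of_nonneg_left hm.le (by positivity)
        _ = 1 := by field_simp
    have h2 : K * (ρ ^ m * (K * ε)) ≤ 1/2 * ε := by
      have h3 : K * (ρ ^ m * (K * ε)) = (2 * K ^ 2 * ρ ^ m) * (1/2 * ε) := by ring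
      rw [h3]
      nlinarith
    calc K * (Real.exp (birk f ℓ y.1) * Real.exp (birk f n σy.1))
        < K * (ρ ^ m * (K * ε)) := by exact mul_lt_mul_of_pos_left h1 hK
      _ ≤ 1/2 * ε := h2
  show d2 A μ ⟨concat w ℓ x.1, hadm⟩ y < ENNReal.ofReal (1/2 * ε)
  calc d2 A μ ⟨concat w ℓ x.1, hadm⟩ y
      ≤ μ (cylinder A (concat w ℓ x.1) (ℓ + n)) := hd2
    _ ≤ ENNReal.ofReal (K * Real.exp (birk f (ℓ + n) y.1)) := hgu
    _ < ENNReal.ofReal (1/2 * ε) := by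
        rw [ENNReal.ofReal_lt_ofReal_iff (by positivity)]
        exact hreal
end

section
/- Let T : Ω → Ω preserve a probability measure μ and let χ : Ω → ℝ_{≥0} be measurable. Suppose almost surely that eventually (in n) the number of indices i ∈ {0,…,n−1} with χ(T^i ω) > f_n lies within γ_n of n·μ(χ > f_n), i.e. |Σ_{i=1}^n 1_{χ>f_n}∘T^{i−1} − n·μ(χ>f_n)| < γ_n. Then almost surely, eventually, the trimmed sum with b_n = ⌈n·μ(χ>f_n) + γ_n⌉ largest terms removed satisfies S_n^{b_n}χ ≤ T_n^{f_n}χ, where T_n^{f_n}χ = Σ_{i=1}^n (χ·1_{χ ≤ f_n})∘T^{i−1} and S_n^{b}χ denotes the Birkhoff sum of the first n terms after removing the b largest. -/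
open MeasureTheory Filter

/-- The trimmed Birkhoff sum `S_n^b χ`: the sum of the `n − b` smallest among the first
`n` terms `χ(ω), χ(Tω), …, χ(T^{n−1}ω)`, i.e. the Birkhoff sum with the `b` largest
summands removed. -/
noncomputable def trimmedSum {Ω : Type*} (T : Ω → Ω) (χ : Ω → ℝ) (n b : ℕ) (ω : Ω) : ℝ :=
  ((Finset.range n).powersetCard (n - b)).inf'
    (by
      rw [Finset.powersetCard_nonempty]
      simp)
    (fun s => ∑ i ∈ s, χ (T^[i] ω))

/-- If a.s. eventually the number of indices `i < n` with
`χ(T^i ω) > f_n` lies within `γ_n` of `n·μ(χ > f_n)`, then a.s. eventually the trimmed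
sum with `b_n = ⌈n·μ(χ > f_n) + γ_n⌉` largest terms removed is dominated by the
truncated sum: `S_n^{b_n} χ ≤ T_n^{f_n} χ`. -/
theorem stmt14 {Ω : Type*} [MeasurableSpace Ω] (μ : Measure Ω) [IsProbabilityMeasure μ]
    (T : Ω → Ω) (hT : MeasurePreserving T μ μ)
    (χ : Ω → ℝ) (hχm : Measurable χ) (hχ0 : ∀ ω, 0 ≤ χ ω)
    (f γ : ℕ → ℝ) (hf : ∀ n, 0 < f n) (hγ : ∀ n, 0 < γ n)
    (hcount : ∀ᵐ ω ∂μ, ∀ᶠ n in atTop,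
      |(((Finset.range n).filter fun i => f n < χ (T^[i] ω)).card : ℝ)
          - n * (μ {x | f n < χ x}).toReal| < γ n) :
    ∀ᵐ ω ∂μ, ∀ᶠ n in atTop,
      trimmedSum T χ n ⌈n * (μ {x | f n < χ x}).toReal + γ n⌉₊ ω
        ≤ ∑ i ∈ Finset.range n, Set.indicator {x | χ x ≤ f n} χ (T^[i] ω) := by
  filter_upwards [hcount] with ω h
  filter_upwards [h] with n hn
  set b : ℕ := ⌈n * (μ {x | f n < χ x}).toReal + γ n⌉₊ with hb
  set A : Finset ℕ := (Finset.range n).filter fun i => f n < χ (T^[i] ω) with hA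
  set B : Finset ℕ := (Finset.range n).filter fun i => ¬ f n < χ (T^[i] ω) with hB
  have hcardA : A.card ≤ b := by
    have h1 : (A.card : ℝ) < n * (μ {x | f n < χ x}).toReal + γ n := by
      have := abs_lt.mp hn
      linarith [this.2]
    have h2 : (A.card : ℝ) < (b : ℝ) := lt_of_lt_of_le h1 (Nat.le_ceil _)
    exact_mod_cast h2.le
  have hsum : A.card + B.card = n := by
    rw [hA, hB, Finset.card_filter_add_card_filter_not, Finset.card_range]
  have hle : n - b ≤ B.card := by omega
  obtain ⟨t, htB, htc⟩ := Finset.exists_subset_card_eq hle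
  have ht : t ∈ (Finset.range n).powersetCard (n - b) := by
    rw [Finset.mem_powersetCard]
    exact ⟨htB.trans (Finset.filter_subset _ _), htc⟩
  have h1 : trimmedSum T χ n b ω ≤ ∑ i ∈ t, χ (T^[i] ω) :=
    Finset.inf'_le _ ht
  have h2 : ∑ i ∈ t, χ (T^[i] ω) ≤ ∑ i ∈ B, χ (T^[i] ω) :=
    Finset.sum_le_sum_of_subset_of_nonneg htB fun i _ _ => hχ0 _
  have h3 : ∑ i ∈ B, χ (T^[i] ω)
      = ∑ i ∈ Finset.range n, Set.indicator {x | χ x ≤ f n} χ (T^[i] ω) := by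
    rw [hB]
    rw [Finset.sum_filter]
    refine Finset.sum_congr rfl fun i _ => ?_
    by_cases hi : f n < χ (T^[i] ω)
    · simp [hi, Set.indicator_apply, not_le.mpr hi]
    · simp [hi, Set.indicator_apply, not_lt.mp hi]
  linarith
end

section
/- Let X be a one-sided subshift of finite type with a stationary Markov measure μ and alphabet containing 𝔞₁ with q = μ(x_n=𝔞₁|x_{n−1}=𝔞₁) > 0. Let [𝔞₁]_n denote the cylinder of n consecutive 𝔞₁'s and define χ((x_j)) = η^{min{j : x_j ≠ 𝔞₁}−1} for η > 1/q. Then for every ε ∈ (0,1) with ε ∈ [μ([𝔞₁]_n), μ([𝔞₁]_{n−1})) and every ℓ > 0: (1/ε)·∫ osc(χ·1_{χ≤ℓ}, B(ε,x)) dμ(x) ≤ ℓ, where B(ε,x) is the ball in the metric d₂(x,y) = inf{μ(C) : x,y ∈ C, C a cylinder}. -/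
open MeasureTheory
open scoped ENNReal

section Aux

open Filter

lemma real_limsup_bot_s17 {α : Type*} (u : α → ℝ) : Filter.limsup u (⊥ : Filter α) = 0 := by
  rw [Filter.limsup_eq]
  have : {a : ℝ | ∀ᶠ n in (⊥ : Filter α), u n ≤ a} = Set.univ := by simp
  rw [this]
  exact Real.sInf_of_not_bddBelow not_bddBelow_univ

lemma real_liminf_bot_s17 {α : Type*} (u : α → ℝ) : Filter.liminf u (⊥ : Filter α) = 0 := by
  rw [Filter.liminf_eq]
  have : {a : ℝ | ∀ᶠ n in (⊥ : Filter α), a ≤ u n} = Set.univ := by simp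
  rw [this]
  exact Real.sSup_univ

lemma osc_restrict_zero {α : Type*} [MeasurableSpace α] {μ : Measure α}
    {h : α → ℝ} {C : Set α} (hz : μ.restrict C = 0) : osc μ h C = 0 := by
  rw [osc, essSup, essInf, hz, ae_zero, real_limsup_bot_s17, real_liminf_bot_s17, sub_self]

lemma osc_le_aux {α : Type*} [MeasurableSpace α] (μ : Measure α)
    (h : α → ℝ) (C : Set α) {b : ℝ} (hb : 0 ≤ b)
    (h0 : ∀ᵐ x ∂(μ.restrict C), 0 ≤ h x)
    (h1 : ∀ᵐ x ∂(μ.restrict C), h x ≤ b) : osc μ h C ≤ b := by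
  by_cases hz : μ.restrict C = 0
  · rw [osc_restrict_zero hz]; exact hb
  · have hne : (ae (μ.restrict C)).NeBot := ae_neBot.2 hz
    have hsup : essSup h (μ.restrict C) ≤ b :=
      Filter.limsup_le_of_le (Filter.isCoboundedUnder_le_of_eventually_le _ h0) h1
    have hinf : (0 : ℝ) ≤ essInf h (μ.restrict C) :=
      Filter.le_liminf_of_le (Filter.isCoboundedUnder_ge_of_eventually_le _ h1) h0
    rw [osc]; linarith

lemma osc_const_aux {α : Type*} [MeasurableSpace α] (μ : Measure α)
    (h : α → ℝ) (C : Set α) (c : ℝ)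
    (hc : ∀ᵐ x ∂(μ.restrict C), h x = c) : osc μ h C = 0 := by
  by_cases hz : μ.restrict C = 0
  · exact osc_restrict_zero hz
  · have := NeZero.mk hz
    have hc' : h =ᵐ[μ.restrict C] fun _ => c := hc
    rw [osc, essSup_congr_ae hc', essInf_congr_ae hc', essSup_const', essInf_const', sub_self]

end Aux

/-- For the Markov measure and the observable `χ` of the St. Petersburg
example, for every `ε ∈ [μ([𝔞₁]_n), μ([𝔞₁]_{n−1}))` and every `ℓ > 0`,
`(1/ε)·∫ osc(χ·1_{χ≤ℓ}, B(ε,x)) dμ(x) ≤ ℓ`, with balls in the measure-metric `d₂`. -/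
theorem stmt17 {𝔸 : Type*} [Fintype 𝔸] [DecidableEq 𝔸] [MeasurableSpace 𝔸]
    [MeasurableSingletonClass 𝔸]
    (A : 𝔸 → 𝔸 → Bool) (hcard : 2 ≤ Fintype.card 𝔸) (hprim : Primitive A)
    (P : 𝔸 → 𝔸 → ℝ) (pi0 : 𝔸 → ℝ)
    (hPnn : ∀ i j, 0 ≤ P i j) (hcompat : ∀ i j, P i j = 0 ↔ A i j = false)
    (hrow : ∀ i, ∑ j, P i j = 1)
    (hπnn : ∀ i, 0 ≤ pi0 i) (hπsum : ∑ i, pi0 i = 1)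
    (hstat : ∀ j, ∑ i, pi0 i * P i j = pi0 j)
    (μ : Measure {x : ℕ → 𝔸 // Adm A x}) [IsProbabilityMeasure μ]
    (hμ : ∀ (n : ℕ) (w : ℕ → 𝔸), μ (cylinder A w (n + 1)) =
      ENNReal.ofReal (pi0 (w 0) * ∏ i ∈ Finset.range n, P (w i) (w (i + 1))))
    (a1 : 𝔸) (q η : ℝ) (hq : q = P a1 a1) (hq0 : 0 < q) (hη : 1 / q < η)
    (χ : {x : ℕ → 𝔸 // Adm A x} → ℝ)
    (hχ : ∀ (x : {x : ℕ → 𝔸 // Adm A x}) (h : ∃ j, x.1 j ≠ a1),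
      χ x = η ^ Nat.find h) :
    ∀ (n : ℕ), 1 ≤ n → ∀ ε ℓ : ℝ, 0 < ε → ε < 1 → 0 < ℓ →
      (μ (cylinder A (fun _ => a1) n)).toReal ≤ ε →
      ε < (μ (cylinder A (fun _ => a1) (n - 1))).toReal →
      (∫⁻ x, ENNReal.ofReal
          (osc μ (Set.indicator {y | χ y ≤ ℓ} χ) (ball A μ ε x)) ∂μ)
        / ENNReal.ofReal ε ≤ ENNReal.ofReal ℓ := by
  intro n hn ε ℓ hε0 hε1 hℓ0 hlo hhi
  set h : {x : ℕ → 𝔸 // Adm A x} → ℝ := Set.indicator {y | χ y ≤ ℓ} χ with hh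
  -- measurability of coordinates / cylinders
  have hmeas_coord : ∀ i : ℕ, Measurable (fun y : {x : ℕ → 𝔸 // Adm A x} => y.1 i) := fun i =>
    (measurable_pi_apply i).comp measurable_subtype_coe
  have hmeas_agree : ∀ (w : ℕ → 𝔸) (m : ℕ),
      MeasurableSet {y : {x : ℕ → 𝔸 // Adm A x} | ∀ i < m, w i = y.1 i} := by
    intro w m
    have : {y : {x : ℕ → 𝔸 // Adm A x} | ∀ i < m, w i = y.1 i} =
        ⋂ i, ⋂ (_ : i < m), (fun y : {x : ℕ → 𝔸 // Adm A x} => y.1 i) ⁻¹' {w i} := by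
      ext y; simp [eq_comm]
    rw [this]
    exact MeasurableSet.iInter fun i => MeasurableSet.iInter fun _ =>
      (hmeas_coord i) (measurableSet_singleton _)
  have hmeas_cyl : ∀ (w : ℕ → 𝔸) (m : ℕ), MeasurableSet (_root_.cylinder A w m) := by
    intro w m
    have : _root_.cylinder A w m = {y : {x : ℕ → 𝔸 // Adm A x} | ∀ i < m, w i = y.1 i} := by
      ext y; simp [_root_.cylinder, eq_comm]
    rw [this]; exact hmeas_agree w m
  -- q < 1
  have hq1 : q < 1 := by
    by_contra hc
    push_neg at hc
    have hqle : q ≤ 1 := by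
      rw [hq, ← hrow a1]
      exact Finset.single_le_sum (fun j _ => hPnn a1 j) (Finset.mem_univ a1)
    have hq1' : q = 1 := le_antisymm hqle hc
    -- all other transitions from a1 are forbidden
    have hPone : P a1 a1 = 1 := by rw [← hq, hq1']
    have hzero : ∀ j, j ≠ a1 → P a1 j = 0 := by
      intro j hj
      have hsplit := Finset.add_sum_erase Finset.univ (P a1) (Finset.mem_univ a1)
      rw [hrow a1] at hsplit
      have hsum : ∑ k ∈ Finset.univ.erase a1, P a1 k = 0 := by
        rw [hPone] at hsplit; linarith
      exact (Finset.sum_eq_zero_iff_of_nonneg (fun k _ => hPnn a1 k)).1 hsum j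
        (Finset.mem_erase.2 ⟨hj, Finset.mem_univ j⟩)
    have hA : ∀ j, j ≠ a1 → A a1 j = false := fun j hj => (hcompat a1 j).1 (hzero j hj)
    obtain ⟨b, hb⟩ := Fintype.exists_ne_of_one_lt_card (by omega) a1
    obtain ⟨N, hN, hw⟩ := hprim
    obtain ⟨w, hw0, hwN, hwadm⟩ := hw a1 b
    have hall : ∀ k, k ≤ N → w k = a1 := by
      intro k
      induction k with
      | zero => intro _; exact hw0
      | succ k ih =>
        intro hk
        have hk' : k ≤ N := Nat.le_of_succ_le hk
        have hwk : w k = a1 := ih hk'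
        by_contra hne
        have : A a1 (w (k + 1)) = false := hA _ hne
        have h2 := hwadm k (by omega)
        rw [hwk] at h2
        rw [this] at h2
        exact Bool.false_ne_true h2
    exact hb (hwN ▸ hall N le_rfl)
  -- cylinder measure formula
  have hcyl : ∀ m : ℕ, μ (_root_.cylinder A (fun _ => a1) m.succ) =
      ENNReal.ofReal (pi0 a1 * q ^ m) := by
    intro m
    rw [hμ m (fun _ => a1)]
    congr 1
    simp [hq]
  -- S is null
  set S : Set {x : ℕ → 𝔸 // Adm A x} := {x : {x : ℕ → 𝔸 // Adm A x} | ∀ j, x.1 j = a1} with hS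
  have hSnull : μ S = 0 := by
    have hsub : ∀ m : ℕ, S ⊆ _root_.cylinder A (fun _ => a1) m.succ := by
      intro m x hx i _
      exact hx i
    have hle : ∀ m : ℕ, μ S ≤ ENNReal.ofReal (pi0 a1 * q ^ m) := by
      intro m
      rw [← hcyl m]
      exact measure_mono (hsub m)
    have htend : Filter.Tendsto (fun m => ENNReal.ofReal (pi0 a1 * q ^ m))
        Filter.atTop (nhds 0) := by
      rw [← ENNReal.ofReal_zero]
      apply ENNReal.tendsto_ofReal
      simpa using (tendsto_pow_atTop_nhds_zero_of_lt_one hq0.le hq1).const_mul (pi0 a1)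
    exact le_antisymm (ge_of_tendsto' htend hle) zero_le
  have hη0 : 0 < η := lt_trans (by positivity) hη
  -- pointwise bounds on h
  have hhub : ∀ x : {x : ℕ → 𝔸 // Adm A x}, h x ≤ ℓ := by
    intro x
    simp only [hh, Set.indicator_apply, Set.mem_setOf_eq]
    split_ifs with hx
    · exact hx
    · exact hℓ0.le
  have hhnn : ∀ x : {x : ℕ → 𝔸 // Adm A x}, x ∉ S → 0 ≤ h x := by
    intro x hx
    have hex : ∃ j, x.1 j ≠ a1 := by
      by_contra hcon
      push_neg at hcon
      exact hx hcon
    simp only [hh, Set.indicator_apply, Set.mem_setOf_eq]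
    split_ifs with hmem
    · rw [hχ x hex]; positivity
    · exact le_refl 0
  have hnn_ae : ∀ᵐ x ∂μ, 0 ≤ h x := by
    have : {x : {x : ℕ → 𝔸 // Adm A x} | ¬ 0 ≤ h x} ⊆ S := by
      intro x hx
      by_contra hxs
      exact hx (hhnn x hxs)
    exact measure_mono_null this hSnull
  -- ball membership unfolding
  have hball : ∀ x y : {x : ℕ → 𝔸 // Adm A x}, y ∈ ball A μ ε x →
      ∃ m, (∀ i < m, x.1 i = y.1 i) ∧ μ (_root_.cylinder A x.1 m) < ENNReal.ofReal ε := by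
    intro x y hy
    simp only [ball, Set.mem_setOf_eq, d2, iInf_lt_iff] at hy
    obtain ⟨m, hagree, hlt⟩ := hy
    exact ⟨m, hagree, hlt⟩
  have hmeas_ball : ∀ x : {x : ℕ → 𝔸 // Adm A x}, MeasurableSet (ball A μ ε x) := by
    intro x
    have : ball A μ ε x = ⋃ m, ⋃ (_ : μ (_root_.cylinder A x.1 m) < ENNReal.ofReal ε),
        {y : {x : ℕ → 𝔸 // Adm A x} | ∀ i < m, x.1 i = y.1 i} := by
      ext y
      simp only [ball, Set.mem_setOf_eq, d2, iInf_lt_iff, Set.mem_iUnion]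
      tauto
    rw [this]
    exact MeasurableSet.iUnion fun m => MeasurableSet.iUnion fun _ => hmeas_agree _ m
  -- ofReal ε < μ (cylinder (n-1))
  have hεlt : ENNReal.ofReal ε < μ (_root_.cylinder A (fun _ => a1) (n - 1)) :=
    (ENNReal.ofReal_lt_iff_lt_toReal hε0.le (measure_ne_top μ _)).2 hhi
  -- main pointwise estimate
  have hpt : ∀ x : {x : ℕ → 𝔸 // Adm A x}, ENNReal.ofReal (osc μ h (ball A μ ε x)) ≤
      Set.indicator (_root_.cylinder A (fun _ => a1) n) (fun _ => ENNReal.ofReal ℓ) x := by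
    intro x
    by_cases hx : x ∈ _root_.cylinder A (fun _ => a1) n
    · rw [Set.indicator_of_mem hx]
      apply ENNReal.ofReal_le_ofReal
      apply osc_le_aux μ h _ hℓ0.le
      · exact ae_restrict_of_ae hnn_ae
      · exact Filter.Eventually.of_forall hhub
    · rw [Set.indicator_of_notMem hx]
      have hex : ∃ j, x.1 j ≠ a1 := by
        simp only [_root_.cylinder, Set.mem_setOf_eq, not_forall] at hx
        obtain ⟨i, _, hi⟩ := hx
        exact ⟨i, hi⟩
      set j := Nat.find hex with hj
      have hjn : j < n := by
        simp only [_root_.cylinder, Set.mem_setOf_eq, not_forall] at hx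
        obtain ⟨i, hi_lt, hi⟩ := hx
        exact lt_of_le_of_lt (Nat.find_min' hex hi) hi_lt
      -- every point of the ball has the same χ value η ^ j
      have hkey : ∀ y : {x : ℕ → 𝔸 // Adm A x}, y ∈ ball A μ ε x → χ y = η ^ j := by
        intro y hy
        obtain ⟨m, hagree, hlt⟩ := hball x y hy
        have hjm : j < m := by
          by_contra hcon
          push_neg at hcon  -- m ≤ j
          have hcylm : _root_.cylinder A x.1 m = _root_.cylinder A (fun _ => a1) m := by
            ext z
            simp only [_root_.cylinder, Set.mem_setOf_eq]
            constructor
            · intro hz i him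
              rw [hz i him]
              have := Nat.find_min hex (lt_of_lt_of_le him hcon)
              push_neg at this
              exact this
            · intro hz i him
              have hxa : x.1 i = a1 := by
                have := Nat.find_min hex (lt_of_lt_of_le him hcon)
                push_neg at this
                exact this
              rw [hz i him, hxa]
          have hmono : _root_.cylinder A (fun _ => a1) (n - 1) ⊆ _root_.cylinder A (fun _ => a1) m := by
            intro z hz i him
            exact hz i (lt_of_lt_of_le him (le_trans hcon (by omega)))
          have : ENNReal.ofReal ε < μ (_root_.cylinder A x.1 m) := by
            rw [hcylm]
            exact lt_of_lt_of_le hεlt (measure_mono hmono)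
          exact absurd hlt (not_lt.2 this.le)
        have hyex : ∃ j', y.1 j' ≠ a1 := by
          refine ⟨j, ?_⟩
          rw [← hagree j hjm]
          exact Nat.find_spec hex
        have hfind : Nat.find hyex = j := by
          rw [Nat.find_eq_iff]
          constructor
          · rw [← hagree j hjm]; exact Nat.find_spec hex
          · intro i hij
            have := Nat.find_min hex hij
            push_neg at this
            push_neg
            rw [← hagree i (lt_trans hij hjm)]
            exact this
        rw [hχ y hyex, hfind]
      -- h is a.e. constant on the ball
      have hconst : osc μ h (ball A μ ε x) = 0 := by
        apply osc_const_aux μ h _ (if η ^ j ≤ ℓ then η ^ j else 0)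
        filter_upwards [ae_restrict_mem (hmeas_ball x)] with y hy
        simp only [hh, Set.indicator_apply, Set.mem_setOf_eq, hkey y hy]
      rw [hconst]
      simp
  -- integrate
  have hint : (∫⁻ x, ENNReal.ofReal (osc μ h (ball A μ ε x)) ∂μ) ≤
      ENNReal.ofReal ℓ * μ (_root_.cylinder A (fun _ => a1) n) := by
    calc (∫⁻ x, ENNReal.ofReal (osc μ h (ball A μ ε x)) ∂μ)
        ≤ ∫⁻ x, Set.indicator (_root_.cylinder A (fun _ => a1) n)
            (fun _ => ENNReal.ofReal ℓ) x ∂μ := lintegral_mono hpt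
      _ = ENNReal.ofReal ℓ * μ (_root_.cylinder A (fun _ => a1) n) := by
          rw [lintegral_indicator (hmeas_cyl _ _), setLIntegral_const]
  have hcy : μ (_root_.cylinder A (fun _ => a1) n) ≤ ENNReal.ofReal ε :=
    (ENNReal.le_ofReal_iff_toReal_le (measure_ne_top μ _) hε0.le).2 hlo
  calc (∫⁻ x, ENNReal.ofReal (osc μ h (ball A μ ε x)) ∂μ) / ENNReal.ofReal ε
      ≤ (ENNReal.ofReal ℓ * ENNReal.ofReal ε) / ENNReal.ofReal ε := by
        apply ENNReal.div_le_div_right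
        exact le_trans hint (mul_le_mul_right hcy _)
    _ = ENNReal.ofReal ℓ := by
        rw [mul_div_assoc,
          ENNReal.div_self (ENNReal.ofReal_pos.2 hε0).ne' ENNReal.ofReal_ne_top, mul_one]
end

section
/- Let (Ω, 𝒜, μ, T) be a measure-preserving system and χ : Ω → ℝ_{≥0}. Suppose there exist K, E > 0 such that for every ε ∈ (0,E), r > 0 with μ(χ ≤ r) > 0, and n large: μ(max_{i≤n} |T_i^r χ − ∫T_i^r χ dμ| ≥ ε·∫T_n^r χ dμ) ≤ K·exp(−ε·(∫T_n^r χ dμ)/r), where T_i^r χ = Σ_{k=1}^i (χ·1_{χ≤r})∘T^{k−1}. If (f_n) satisfies f_n → ∞ and n·∫χ·1_{χ≤f_n}dμ/f_n ≥ n^{1/2} along the subsequence where f_n ≤ n^{1/2}, and ∫χ·1_{χ≤n^{1/2}}dμ ≥ 1 for large n, then for ḡ_n := min{f_n, n^{1/2}} and every ε ∈ (0,E), Σ_n μ(|T_n^{ḡ_n}χ − ∫T_n^{ḡ_n}χ dμ| ≥ ε ∫T_n^{ḡ_n}χ dμ) < ∞, and hence by Borel–Cantelli, μ-a.s. |T_n^{ḡ_n}χ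 − ∫T_n^{ḡ_n}χ dμ| < ε ∫T_n^{ḡ_n}χ dμ eventually. -/
open MeasureTheory Filter

/-- The truncated Birkhoff sum `T_i^r χ = Σ_{k=1}^i (χ·1_{χ ≤ r})∘T^{k−1}`. -/
noncomputable def truncSum {Ω : Type*} (T : Ω → Ω) (χ : Ω → ℝ) (r : ℝ) (i : ℕ)
    (ω : Ω) : ℝ :=
  ∑ k ∈ Finset.range i, Set.indicator {y | χ y ≤ r} χ (T^[k] ω)


lemma summable_of_eventually_le {a b : ℕ → ℝ} (h0 : ∀ n, 0 ≤ a n) (hb : Summable b)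
    (h : ∀ᶠ n in atTop, a n ≤ b n) : Summable a := by
  obtain ⟨M, hM⟩ := eventually_atTop.mp h
  rw [← summable_nat_add_iff M]
  exact Summable.of_nonneg_of_le (fun n => h0 _) (fun n => hM _ (Nat.le_add_left M n))
    ((summable_nat_add_iff M).mpr hb)

lemma trunc_integrable {Ω : Type*} [MeasurableSpace Ω] (μ : Measure Ω) [IsProbabilityMeasure μ]
    {χ : Ω → ℝ} (hχm : Measurable χ) (hχ0 : ∀ ω, 0 ≤ χ ω) (r : ℝ) :
    Integrable (Set.indicator {y | χ y ≤ r} χ) μ := by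
  have hm : Measurable (Set.indicator {y | χ y ≤ r} χ) :=
    hχm.indicator (measurableSet_le hχm measurable_const)
  refine ⟨hm.aestronglyMeasurable,
    HasFiniteIntegral.of_bounded (C := max r 0) (ae_of_all _ fun x => ?_)⟩
  rw [Real.norm_eq_abs, abs_of_nonneg (Set.indicator_nonneg (fun y _ => hχ0 y) x)]
  by_cases h : χ x ≤ r
  · rw [Set.indicator_of_mem (show x ∈ {y | χ y ≤ r} from h)]; exact le_max_of_le_left h
  · rw [Set.indicator_of_notMem (show x ∉ {y | χ y ≤ r} from h)]; exact le_max_right _ _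

lemma integral_truncSum {Ω : Type*} [MeasurableSpace Ω] (μ : Measure Ω) [IsProbabilityMeasure μ]
    {T : Ω → Ω} (hT : MeasurePreserving T μ μ) {χ : Ω → ℝ} (hχm : Measurable χ)
    (hχ0 : ∀ ω, 0 ≤ χ ω) (r : ℝ) (n : ℕ) :
    ∫ x, truncSum T χ r n x ∂μ = n * ∫ x, Set.indicator {y | χ y ≤ r} χ x ∂μ := by
  set g := Set.indicator {y | χ y ≤ r} χ with hgdef
  have hgi := trunc_integrable μ hχm hχ0 r
  have hTk : ∀ k : ℕ, MeasurePreserving (T^[k]) μ μ := fun k => hT.iterate k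
  have hint : ∀ k : ℕ, Integrable (fun x => g (T^[k] x)) μ := fun k =>
    ((hTk k).integrable_comp hgi.aestronglyMeasurable).mpr hgi
  have hci : ∀ k : ℕ, ∫ x, g (T^[k] x) ∂μ = ∫ x, g x ∂μ := by
    intro k
    have h1 : ∫ y, g y ∂(Measure.map (T^[k]) μ) = ∫ x, g (T^[k] x) ∂μ :=
      integral_map (hTk k).measurable.aemeasurable
        (((hTk k).map_eq).symm ▸ hgi.aestronglyMeasurable)
    rw [← h1, (hTk k).map_eq]
  unfold truncSum
  rw [integral_finset_sum _ (fun k _ => hint k)]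
  simp [hci, Finset.sum_const]

lemma summable_K_exp (K ε : ℝ) (hε : 0 < ε) :
    Summable (fun n : ℕ => K * Real.exp (-ε * Real.sqrt n)) := by
  apply Summable.mul_left
  rw [← summable_nat_add_iff 1]
  have hsum : Summable (fun n : ℕ => (24 / ε ^ 4) * (1 / ((n : ℝ) + 1) ^ 2)) := by
    apply Summable.mul_left
    have := (summable_nat_add_iff 1).mpr (Real.summable_one_div_nat_pow.mpr one_lt_two)
    exact this.congr (by intro n; push_cast; ring)
  refine Summable.of_nonneg_of_le (fun n => (Real.exp_pos _).le) (fun n => ?_) hsum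
  set m : ℝ := (n : ℝ) + 1 with hm
  have hm1 : 1 ≤ m := by simp [hm]
  have hsq : Real.sqrt ((n : ℕ) + 1 : ℕ) = Real.sqrt m := by push_cast; rfl
  rw [hsq]
  set x : ℝ := ε * Real.sqrt m with hx
  have hx0 : 0 ≤ x := by positivity
  have hpow : x ^ 4 / 24 ≤ Real.exp x := by
    have := Real.pow_div_factorial_le_exp (x := x) hx0 4
    norm_num [Nat.factorial] at this
    linarith
  have hx4 : x ^ 4 = ε ^ 4 * m ^ 2 := by
    have h : Real.sqrt m ^ 2 = m := Real.sq_sqrt (by linarith)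
    calc x ^ 4 = ε ^ 4 * (Real.sqrt m ^ 2) ^ 2 := by rw [hx]; ring
      _ = ε ^ 4 * m ^ 2 := by rw [h]
  have hexp : Real.exp (-ε * Real.sqrt m) = (Real.exp x)⁻¹ := by
    rw [← Real.exp_neg]; ring_nf; rw [hx]
  rw [hexp]
  have hxepos : 0 < Real.exp x := Real.exp_pos _
  have h1 : ε ^ 4 * m ^ 2 / 24 ≤ Real.exp x := by rw [← hx4]; exact hpow
  have hmpos : 0 < m := by linarith
  have h2 : 0 < ε ^ 4 * m ^ 2 / 24 := by positivity
  calc (Real.exp x)⁻¹ ≤ (ε ^ 4 * m ^ 2 / 24)⁻¹ := by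
        exact inv_anti₀ h2 h1
    _ = 24 / ε ^ 4 * (1 / m ^ 2) := by
        rw [one_div]
        field_simp

/-- Given the exponential concentration bound for truncated Birkhoff sums,
if `f_n → ∞`, `n·∫χ1_{χ≤f_n}/f_n ≥ √n` whenever `f_n ≤ √n`, and `∫χ1_{χ≤√n} ≥ 1` for
large `n`, then for `ḡ_n = min{f_n, √n}` and every `ε ∈ (0,E)` the deviation
probabilities are summable, and hence a.s. eventually
`|T_n^{ḡ_n}χ − ∫T_n^{ḡ_n}χ dμ| < ε·∫T_n^{ḡ_n}χ dμ`. -/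
theorem stmt19 {Ω : Type*} [MeasurableSpace Ω] (μ : Measure Ω) [IsProbabilityMeasure μ]
    (T : Ω → Ω) (hT : MeasurePreserving T μ μ)
    (χ : Ω → ℝ) (hχm : Measurable χ) (hχ0 : ∀ ω, 0 ≤ χ ω)
    (K E : ℝ) (hK : 0 < K) (hE : 0 < E) (N : ℕ)
    (hconc : ∀ ε ∈ Set.Ioo (0 : ℝ) E, ∀ r : ℝ, 0 < r → 0 < μ {x | χ x ≤ r} →
      ∀ n : ℕ, N ≤ n →
      μ {ω | ∃ i ≤ n, ε * ∫ x, truncSum T χ r n x ∂μ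
              ≤ |truncSum T χ r i ω - ∫ x, truncSum T χ r i x ∂μ|}
        ≤ ENNReal.ofReal
            (K * Real.exp (-ε * (∫ x, truncSum T χ r n x ∂μ) / r)))
    (f : ℕ → ℝ) (hfpos : ∀ n, 0 < f n) (hftop : Tendsto f atTop atTop)
    (hflow : ∀ᶠ n : ℕ in atTop, f n ≤ Real.sqrt n →
      Real.sqrt n ≤ n * (∫ x, Set.indicator {y | χ y ≤ f n} χ x ∂μ) / f n)
    (hint1 : ∀ᶠ n : ℕ in atTop,
      1 ≤ ∫ x, Set.indicator {y | χ y ≤ Real.sqrt n} χ x ∂μ) :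
    ∀ ε ∈ Set.Ioo (0 : ℝ) E,
      Summable (fun n : ℕ =>
        (μ {ω | ε * ∫ x, truncSum T χ (min (f n) (Real.sqrt n)) n x ∂μ
            ≤ |truncSum T χ (min (f n) (Real.sqrt n)) n ω
                - ∫ x, truncSum T χ (min (f n) (Real.sqrt n)) n x ∂μ|}).toReal) ∧
      ∀ᵐ ω ∂μ, ∀ᶠ n : ℕ in atTop,
        |truncSum T χ (min (f n) (Real.sqrt n)) n ω
            - ∫ x, truncSum T χ (min (f n) (Real.sqrt n)) n x ∂μ|
          < ε * ∫ x, truncSum T χ (min (f n) (Real.sqrt n)) n x ∂μ := by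

  intro ε hε
  obtain ⟨hε0, hεE⟩ := hε
  have key : ∀ᶠ n : ℕ in atTop,
      μ {ω | ε * ∫ x, truncSum T χ (min (f n) (Real.sqrt n)) n x ∂μ
            ≤ |truncSum T χ (min (f n) (Real.sqrt n)) n ω
                - ∫ x, truncSum T χ (min (f n) (Real.sqrt n)) n x ∂μ|}
        ≤ ENNReal.ofReal (K * Real.exp (-ε * Real.sqrt n)) := by
    filter_upwards [hflow, hint1, eventually_ge_atTop 1, eventually_ge_atTop N]
      with n hfl hi1 hn1 hnN
    set r := min (f n) (Real.sqrt n) with hr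
    have hn0 : (0:ℝ) < n := by exact_mod_cast hn1
    have hsq : 0 < Real.sqrt n := Real.sqrt_pos.mpr hn0
    have hrpos : 0 < r := lt_min (hfpos n) hsq
    set J := ∫ x, Set.indicator {y | χ y ≤ r} χ x ∂μ with hJ
    have hJr : Real.sqrt n ≤ n * J / r := by
      rcases le_or_gt (f n) (Real.sqrt n) with h | h
      · have hrf : r = f n := min_eq_left h
        rw [hJ, hrf]
        exact hfl h
      · have hrf : r = Real.sqrt n := min_eq_right h.le
        rw [hJ, hrf]
        have h1 : (n:ℝ) ≤ n * ∫ x, Set.indicator {y | χ y ≤ Real.sqrt n} χ x ∂μ := by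
          nlinarith
        calc Real.sqrt n = n / Real.sqrt n := (Real.div_sqrt).symm
          _ ≤ n * (∫ x, Set.indicator {y | χ y ≤ Real.sqrt n} χ x ∂μ) / Real.sqrt n := by
              gcongr
    have hJpos : 0 < J := by
      have h1 : 0 < n * J / r := lt_of_lt_of_le hsq hJr
      rcases div_pos_iff.mp h1 with ⟨h2, _⟩ | ⟨_, h3⟩
      · by_contra h
        push_neg at h
        nlinarith
      · linarith
    have hμpos : 0 < μ {x | χ x ≤ r} := by
      rcases (zero_le : 0 ≤ μ {x | χ x ≤ r}).eq_or_lt with h0 | h0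
      · exfalso
        have hms : MeasurableSet {y | χ y ≤ r} := measurableSet_le hχm measurable_const
        have : J = 0 := by
          rw [hJ, integral_indicator hms]
          have hres : μ.restrict {y | χ y ≤ r} = 0 := Measure.restrict_eq_zero.mpr h0.symm
          rw [hres, integral_zero_measure]
        linarith
      · exact h0
    have hIn : ∫ x, truncSum T χ r n x ∂μ = n * J := integral_truncSum μ hT hχm hχ0 r n
    have hmono : μ {ω | ε * ∫ x, truncSum T χ r n x ∂μ
            ≤ |truncSum T χ r n ω - ∫ x, truncSum T χ r n x ∂μ|}
        ≤ μ {ω | ∃ i ≤ n, ε * ∫ x, truncSum T χ r n x ∂μ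
              ≤ |truncSum T χ r i ω - ∫ x, truncSum T χ r i x ∂μ|} :=
      measure_mono (fun ω hω => ⟨n, le_refl n, hω⟩)
    have hb := hconc ε ⟨hε0, hεE⟩ r hrpos hμpos n hnN
    have hexp : -ε * (∫ x, truncSum T χ r n x ∂μ) / r ≤ -ε * Real.sqrt n := by
      rw [hIn]
      have h2 : ε * Real.sqrt n ≤ ε * (n * J / r) := mul_le_mul_of_nonneg_left hJr hε0.le
      calc -ε * (n * J) / r = -(ε * (n * J / r)) := by ring
        _ ≤ -(ε * Real.sqrt n) := by linarith
        _ = -ε * Real.sqrt n := by ring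
    calc μ {ω | ε * ∫ x, truncSum T χ r n x ∂μ
            ≤ |truncSum T χ r n ω - ∫ x, truncSum T χ r n x ∂μ|}
        ≤ μ {ω | ∃ i ≤ n, ε * ∫ x, truncSum T χ r n x ∂μ
              ≤ |truncSum T χ r i ω - ∫ x, truncSum T χ r i x ∂μ|} := hmono
      _ ≤ ENNReal.ofReal (K * Real.exp (-ε * (∫ x, truncSum T χ r n x ∂μ) / r)) := hb
      _ ≤ ENNReal.ofReal (K * Real.exp (-ε * Real.sqrt n)) := by
          exact ENNReal.ofReal_le_ofReal
            (mul_le_mul_of_nonneg_left (Real.exp_le_exp.mpr hexp) hK.le)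
  have hsum : Summable (fun n : ℕ =>
      (μ {ω | ε * ∫ x, truncSum T χ (min (f n) (Real.sqrt n)) n x ∂μ
          ≤ |truncSum T χ (min (f n) (Real.sqrt n)) n ω
              - ∫ x, truncSum T χ (min (f n) (Real.sqrt n)) n x ∂μ|}).toReal) := by
    refine summable_of_eventually_le (fun n => ENNReal.toReal_nonneg)
      (summable_K_exp K ε hε0) ?_
    filter_upwards [key] with n hn
    exact ENNReal.toReal_le_of_le_ofReal (by positivity) hn
  refine ⟨hsum, ?_⟩
  have htsum : (∑' n : ℕ, μ {ω | ε * ∫ x, truncSum T χ (min (f n) (Real.sqrt n)) n x ∂μ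
          ≤ |truncSum T χ (min (f n) (Real.sqrt n)) n ω
              - ∫ x, truncSum T χ (min (f n) (Real.sqrt n)) n x ∂μ|}) ≠ ⊤ := by
    have heq : ∀ n : ℕ, μ {ω | ε * ∫ x, truncSum T χ (min (f n) (Real.sqrt n)) n x ∂μ
          ≤ |truncSum T χ (min (f n) (Real.sqrt n)) n ω
              - ∫ x, truncSum T χ (min (f n) (Real.sqrt n)) n x ∂μ|}
        = ENNReal.ofReal ((μ {ω | ε * ∫ x, truncSum T χ (min (f n) (Real.sqrt n)) n x ∂μ
          ≤ |truncSum T χ (min (f n) (Real.sqrt n)) n ω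
              - ∫ x, truncSum T χ (min (f n) (Real.sqrt n)) n x ∂μ|}).toReal) :=
      fun n => (ENNReal.ofReal_toReal (measure_ne_top μ _)).symm
    rw [tsum_congr heq,
      ← ENNReal.ofReal_tsum_of_nonneg (fun n => ENNReal.toReal_nonneg) hsum]
    exact ENNReal.ofReal_ne_top
  filter_upwards [ae_eventually_notMem htsum] with ω hω
  filter_upwards [hω] with n hn
  exact not_le.mp hn
end
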